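/- arXiv:2001.04896 — 4 statements merged into one kernel-verified Lean document; each statement's English description precedes it below -/
import Mathlib

section
/- Let σ be a nonempty closed bounded subset of ℝ^D, and let r(σ) denote the radius of the smallest enclosing ball of σ. Then every point y of the convex hull of σ satisfies d(y, σ) ≤ r(σ); that is, the asymmetric Hausdorff distance from Conv(σ) to σ is at most r(σ). -/
open Metric Set

noncomputable section

variable {D d : ℕ}

/-- Radius of the smallest enclosing ball of a set: infimum over centers `z` of the
smallest `r` with `σ ⊆ closedBall z r`. -/
def sebRadius (σ : Set (EuclideanSpace ℝ (Fin D))) : ℝ :=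
  sInf {r : ℝ | ∃ z : EuclideanSpace ℝ (Fin D), σ ⊆ Metric.closedBall z r}

/-- The `t`-convex hull `Conv(t, A) = ⋃ {Conv σ : σ ⊆ A, r(σ) ≤ t}`. -/
def tConv (t : ℝ) (A : Set (EuclideanSpace ℝ (Fin D))) : Set (EuclideanSpace ℝ (Fin D)) :=
  ⋃ σ ∈ {σ : Set (EuclideanSpace ℝ (Fin D)) | σ ⊆ A ∧ sebRadius σ ≤ t}, convexHull ℝ σ

/-- The convexity defect function `h(t, A) = d_H(Conv(t,A), A)`. -/
def convDefect (t : ℝ) (A : Set (EuclideanSpace ℝ (Fin D))) : ℝ :=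
  Metric.hausdorffDist (tConv t A) A

/-- `Rad(A) = {r(σ) : σ ⊆ A}`. -/
def radSet (A : Set (EuclideanSpace ℝ (Fin D))) : Set ℝ :=
  {r : ℝ | ∃ σ ⊆ A, sebRadius σ = r}

/-- `t_λ(A) = inf {t ∈ Rad(A) : h(t,A) ≤ λ t}`. -/
def tSel (lam : ℝ) (A : Set (EuclideanSpace ℝ (Fin D))) : ℝ :=
  sInf {t : ℝ | t ∈ radSet A ∧ convDefect t A ≤ lam * t}

/-- `x` has a unique metric projection onto `M`. -/
def uniqueProj (M : Set (EuclideanSpace ℝ (Fin D))) (x : EuclideanSpace ℝ (Fin D)) : Prop :=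
  ∃! y, y ∈ M ∧ dist x y = Metric.infDist x M

/-- The reach of a set `M`: the largest `r` such that every point at distance `< r` from `M`
has a unique nearest point on `M`. -/
def reach (M : Set (EuclideanSpace ℝ (Fin D))) : ℝ :=
  sSup {r : ℝ | ∀ x : EuclideanSpace ℝ (Fin D), Metric.infDist x M < r → uniqueProj M x}

open Classical in
/-- The metric projection onto `M` (an arbitrary nearest point, when one exists). -/
def projOn (M : Set (EuclideanSpace ℝ (Fin D))) (x : EuclideanSpace ℝ (Fin D)) :
    EuclideanSpace ℝ (Fin D) :=
  if h : ∃ y, y ∈ M ∧ dist x y = Metric.infDist x M then h.choose else x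

/-- `t*(A) = inf {s < τ(M) : π_M(Conv(s,A)) = M}`. -/
def tStar (A M : Set (EuclideanSpace ℝ (Fin D))) : ℝ :=
  sInf {s : ℝ | s < reach M ∧ projOn M '' tConv s A = M}

/-- The approximation rate `ε(A) = sup {d(x, A) : x ∈ M}`. -/
def epsRate (M A : Set (EuclideanSpace ℝ (Fin D))) : ℝ :=
  sSup ((fun x => Metric.infDist x A) '' M)

/-- `M ⊆ ℝ^D` is a `d`-dimensional `C²` submanifold: around each of its points, `M` is the
image of an injective `C²` immersion from an open subset of `ℝ^d`. -/
def IsC2Submanifold (d : ℕ) (M : Set (EuclideanSpace ℝ (Fin D))) : Prop :=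
  ∀ x ∈ M, ∃ (φ : EuclideanSpace ℝ (Fin d) → EuclideanSpace ℝ (Fin D))
    (u : Set (EuclideanSpace ℝ (Fin d))) (V : Set (EuclideanSpace ℝ (Fin D))),
      IsOpen u ∧ (0 : EuclideanSpace ℝ (Fin d)) ∈ u ∧ φ 0 = x ∧ IsOpen V ∧ x ∈ V ∧
      ContDiffOn ℝ 2 φ u ∧ Set.InjOn φ u ∧ φ '' u = M ∩ V ∧
      ∀ y ∈ u, Function.Injective (fderiv ℝ φ y)

/-- The set of tangent vectors to `M` at `x`, realized as velocities of curves in `M`. -/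
def tangentVectorsAt (M : Set (EuclideanSpace ℝ (Fin D))) (x : EuclideanSpace ℝ (Fin D)) :
    Set (EuclideanSpace ℝ (Fin D)) :=
  {v | ∃ γ : ℝ → EuclideanSpace ℝ (Fin D), (∀ s, γ s ∈ M) ∧ γ 0 = x ∧ HasDerivAt γ v 0}

/-- Every point of the convex hull of a nonempty closed bounded set `σ ⊆ ℝ^D` is within
distance `r(σ)` of `σ`: `d_H(Conv(σ) | σ) ≤ r(σ)`. -/
theorem convexHull_infDist_le_sebRadius {D : ℕ}
    (σ : Set (EuclideanSpace ℝ (Fin D))) (hne : σ.Nonempty) (hcl : IsClosed σ)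
    (hbd : Bornology.IsBounded σ) :
    ∀ y ∈ convexHull ℝ σ, Metric.infDist y σ ≤ sebRadius σ := by
  intro y hy
  have hd0 : 0 ≤ Metric.infDist y σ := Metric.infDist_nonneg
  apply le_csInf
  · obtain ⟨r, hr⟩ := hbd.subset_closedBall 0
    exact ⟨r, 0, hr⟩
  · rintro r ⟨z, hz⟩
    obtain ⟨x0, hx0⟩ := hne
    have hr0 : 0 ≤ r := le_trans dist_nonneg (hz hx0)
    set d := Metric.infDist y σ with hd
    have hC : Convex ℝ {x : EuclideanSpace ℝ (Fin D) |
        d ^ 2 - r ^ 2 - ‖y‖ ^ 2 + ‖z‖ ^ 2 ≤ 2 * (inner ℝ x (z - y) : ℝ)} := by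
      apply convex_halfSpace_ge
      constructor
      · intro a b; rw [inner_add_left]; ring
      · intro c a; rw [real_inner_smul_left, smul_eq_mul]; ring
    have hsub : σ ⊆ {x : EuclideanSpace ℝ (Fin D) |
        d ^ 2 - r ^ 2 - ‖y‖ ^ 2 + ‖z‖ ^ 2 ≤ 2 * (inner ℝ x (z - y) : ℝ)} := by
      intro x hx
      have h1 : d ≤ ‖x - y‖ := by
        rw [← dist_eq_norm, dist_comm]
        exact Metric.infDist_le_dist_of_mem hx
      have h2 : ‖x - z‖ ≤ r := by
        have := hz hx
        rwa [Metric.mem_closedBall, dist_eq_norm] at this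
      have e1 : ‖x - y‖ ^ 2 = ‖x‖ ^ 2 - 2 * (inner ℝ x y : ℝ) + ‖y‖ ^ 2 := by
        rw [norm_sub_sq_real]
      have e2 : ‖x - z‖ ^ 2 = ‖x‖ ^ 2 - 2 * (inner ℝ x z : ℝ) + ‖z‖ ^ 2 := by
        rw [norm_sub_sq_real]
      have e3 : (inner ℝ x (z - y) : ℝ) = inner ℝ x z - inner ℝ x y := inner_sub_right x z y
      have hn : 0 ≤ ‖x - z‖ := norm_nonneg _
      rw [Set.mem_setOf_eq, e3]
      nlinarith [sq_nonneg (‖x - y‖ - d)]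
    have hyC := convexHull_min hsub hC hy
    rw [Set.mem_setOf_eq] at hyC
    have e4 : (inner ℝ y (z - y) : ℝ) = inner ℝ y z - ‖y‖ ^ 2 := by
      rw [inner_sub_right, real_inner_self_eq_norm_sq]
    rw [e4] at hyC
    have e5 : ‖y - z‖ ^ 2 = ‖y‖ ^ 2 - 2 * (inner ℝ y z : ℝ) + ‖z‖ ^ 2 := by
      rw [norm_sub_sq_real]
    nlinarith [sq_nonneg (‖y - z‖ : ℝ)]
end
end

section
/- Let M be a compact C² submanifold of ℝ^D with reach τ(M) > 0. Let σ ⊆ M be a set with radius r(σ) < τ(M) (radius of the smallest enclosing ball), and let y be a point of the convex hull of σ. Then the distance from y to M satisfies d(y, M) ≤ τ(M)(1 − √(1 − r(σ)²/τ(M)²)) ≤ (r(σ)²/(2τ(M)))·(1 + r(σ)²/τ(M)²). -/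
open Metric Set

noncomputable section

variable {D d : ℕ}

namespace ReachAux

variable {M : Set (EuclideanSpace ℝ (Fin D))}

lemma uniqueProj_of_lt_reach (hτ : 0 < reach M)
    {x : EuclideanSpace ℝ (Fin D)} (hx : Metric.infDist x M < reach M) : uniqueProj M x := by
  set S : Set ℝ := {r : ℝ | ∀ x : EuclideanSpace ℝ (Fin D),
    Metric.infDist x M < r → uniqueProj M x} with hS
  have hreach : reach M = sSup S := rfl
  have hSne : S.Nonempty := ⟨0, fun z hz => absurd hz (not_lt.2 Metric.infDist_nonneg)⟩
  by_cases hb : BddAbove S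
  · obtain ⟨s, hsS, hlt⟩ := exists_lt_of_lt_csSup hSne (by rw [← hreach]; exact hx)
    exact hsS x hlt
  · rw [hreach, Real.sSup_of_not_bddAbove hb] at hτ
    exact absurd hτ (lt_irrefl 0)

lemma nearest_unique (hτ : 0 < reach M) {x m m' : EuclideanSpace ℝ (Fin D)}
    (hx : Metric.infDist x M < reach M) (hm : m ∈ M) (hm' : m' ∈ M)
    (h1 : dist x m = Metric.infDist x M) (h2 : dist x m' = Metric.infDist x M) : m = m' := by
  obtain ⟨p, _, hp⟩ := uniqueProj_of_lt_reach hτ hx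
  rw [hp m ⟨hm, h1⟩, hp m' ⟨hm', h2⟩]

lemma proj_stability (hMc : IsCompact M) (hτ : 0 < reach M)
    {p m : EuclideanSpace ℝ (Fin D)} (hp : Metric.infDist p M < reach M)
    (hm : m ∈ M) (hdm : dist p m = Metric.infDist p M) {ε : ℝ} (hε : 0 < ε) :
    ∃ ρ > 0, ∀ q m', dist q p ≤ ρ → m' ∈ M → dist q m' = Metric.infDist q M →
      dist m' m < ε := by
  set C := M ∩ {w | ε ≤ dist w m} with hC
  have hCc : IsCompact C := hMc.inter_right (isClosed_le continuous_const
    (Continuous.dist continuous_id continuous_const))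
  rcases C.eq_empty_or_nonempty with hCe | hCne
  · refine ⟨1, one_pos, fun q m' _ hm' _ => ?_⟩
    by_contra hge
    have hmem : m' ∈ C := ⟨hm', not_lt.1 hge⟩
    rw [hCe] at hmem
    exact hmem
  · obtain ⟨m'', hm''C, hdist⟩ := hCc.exists_infDist_eq_dist hCne p
    have hm''M : m'' ∈ M := hm''C.1
    have hgt : Metric.infDist p M < dist p m'' := by
      rcases lt_or_eq_of_le (Metric.infDist_le_dist_of_mem hm''M) with h | h
      · exact h
      · exfalso
        have heq := nearest_unique hτ hp hm hm''M hdm h.symm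
        have : (0:ℝ) < ε := hε
        have h2 := hm''C.2
        rw [← heq] at h2
        simp only [Set.mem_setOf_eq, dist_self] at h2
        linarith
    set η := dist p m'' - Metric.infDist p M with hη
    have hηpos : 0 < η := by simp only [hη]; linarith
    refine ⟨η/3, by positivity, fun q m' hq hm' hnear => ?_⟩
    by_contra hge
    have hm'C : m' ∈ C := ⟨hm', not_lt.1 hge⟩
    have h1 : dist p m' ≤ dist q m' + dist q p := by
      rw [dist_comm p m']
      exact dist_triangle_left m' p q
    have h2 : Metric.infDist q M ≤ Metric.infDist p M + dist q p :=
      Metric.infDist_le_infDist_add_dist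
    have h3 : Metric.infDist p C ≤ dist p m' := Metric.infDist_le_dist_of_mem hm'C
    rw [hdist] at h3
    rw [hnear] at h1
    linarith

end ReachAux

namespace ReachAux

variable {M : Set (EuclideanSpace ℝ (Fin D))}

lemma step_lemma (hMc : IsCompact M) (hMne : M.Nonempty) (hτ : 0 < reach M)
    {p m : EuclideanSpace ℝ (Fin D)} (hp : Metric.infDist p M < reach M)
    (hp0 : 0 < Metric.infDist p M) (hm : m ∈ M) (hdm : dist p m = Metric.infDist p M)
    {ε : ℝ} (hε : 0 < ε) (hε1 : ε < 1) :
    ∃ h₀ > 0, ∀ h : ℝ, 0 < h → h ≤ h₀ →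
      Metric.infDist p M + (1 - ε) * h ≤
        Metric.infDist (p + h • ((Metric.infDist p M)⁻¹ • (p - m))) M := by
  set δp := Metric.infDist p M with hδp
  set g := (δp⁻¹ : ℝ) • (p - m) with hg
  have hpm : ‖p - m‖ = δp := by rw [← dist_eq_norm]; exact hdm
  have hgnorm : ‖g‖ = 1 := by
    rw [hg, norm_smul, hpm, Real.norm_eq_abs, abs_inv, abs_of_pos hp0,
      inv_mul_cancel₀ (ne_of_gt hp0)]
  obtain ⟨ρ, hρ, hstab⟩ := proj_stability hMc hτ hp hm hdm (ε := δp * ε / 4) (by positivity)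
  refine ⟨ρ, hρ, fun h hh hhρ => ?_⟩
  set q := p + h • g with hq
  have hqp : dist q p = h := by
    rw [hq, dist_eq_norm]
    simp [norm_smul, hgnorm, abs_of_pos hh]
  obtain ⟨m', hm', hdist'⟩ := hMc.exists_infDist_eq_dist hMne q
  have hm'm : dist m' m < δp * ε / 4 := hstab q m' (le_of_eq hqp |>.trans hhρ) hm' hdist'.symm
  set L := ‖p - m'‖ with hL
  have hLδ : δp ≤ L := by
    rw [hL, ← dist_eq_norm]
    exact Metric.infDist_le_dist_of_mem hm'
  have hLpos : (0:ℝ) < L := lt_of_lt_of_le hp0 hLδ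
  set u' := (L⁻¹ : ℝ) • (p - m') with hu'
  have hu'norm : ‖u'‖ = 1 := by
    rw [hu', norm_smul, Real.norm_eq_abs, abs_inv, abs_of_pos hLpos,
      inv_mul_cancel₀ (ne_of_gt hLpos)]
  -- bound ‖g - u'‖ ≤ ε / 2
  have hdiff : ‖g - u'‖ ≤ ε / 2 := by
    have e1 : ‖g - (δp⁻¹ : ℝ) • (p - m')‖ = δp⁻¹ * ‖m' - m‖ := by
      rw [hg, ← smul_sub]
      have : p - m - (p - m') = m' - m := by abel
      rw [this, norm_smul, Real.norm_eq_abs, abs_inv, abs_of_pos hp0]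
    have e2 : ‖(δp⁻¹ : ℝ) • (p - m') - u'‖ = |δp⁻¹ - L⁻¹| * L := by
      rw [hu', ← sub_smul, norm_smul, Real.norm_eq_abs, hL]
    have e3 : |δp⁻¹ - L⁻¹| * L ≤ δp⁻¹ * ‖m' - m‖ := by
      have habs : |L - δp| ≤ ‖m' - m‖ := by
        have h1 := abs_norm_sub_norm_le (p - m') (p - m)
        have hrw : p - m' - (p - m) = m - m' := by abel
        rw [hrw] at h1
        calc |L - δp| = |‖p - m'‖ - ‖p - m‖| := by rw [hL, hpm]
          _ ≤ ‖m - m'‖ := h1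
          _ = ‖m' - m‖ := norm_sub_rev _ _
      have heq : |δp⁻¹ - L⁻¹| * L = |L - δp| / δp := by
        rw [show δp⁻¹ - L⁻¹ = (L - δp) / (δp * L) by field_simp, abs_div]
        rw [abs_of_pos (by positivity : (0:ℝ) < δp * L)]
        field_simp
      rw [heq, div_eq_inv_mul]
      exact mul_le_mul_of_nonneg_left habs (by positivity)
    have e4 : ‖g - u'‖ ≤ ‖g - (δp⁻¹ : ℝ) • (p - m')‖ + ‖(δp⁻¹ : ℝ) • (p - m') - u'‖ := by
      have : g - u' = (g - (δp⁻¹ : ℝ) • (p - m')) + ((δp⁻¹ : ℝ) • (p - m') - u') := by abel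
      rw [this]
      exact norm_add_le _ _
    have e5 : ‖m' - m‖ = dist m' m := (dist_eq_norm _ _).symm
    have e6 : δp⁻¹ * ‖m' - m‖ ≤ ε / 4 := by
      rw [e5]
      calc δp⁻¹ * dist m' m ≤ δp⁻¹ * (δp * ε / 4) :=
            mul_le_mul_of_nonneg_left hm'm.le (by positivity)
        _ = ε / 4 := by field_simp
    calc ‖g - u'‖ ≤ δp⁻¹ * ‖m' - m‖ + δp⁻¹ * ‖m' - m‖ := by
          rw [e1, e2] at e4; linarith [e4, e3]
      _ ≤ ε / 4 + ε / 4 := by linarith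
      _ = ε / 2 := by ring
  -- inner product bound
  have hip : (1:ℝ) - ε ≤ inner ℝ g u' := by
    have hsq : ‖g - u'‖^2 = 2 - 2 * (inner ℝ g u' : ℝ) := by
      rw [norm_sub_sq_real, hgnorm, hu'norm]; ring
    nlinarith [sq_nonneg (‖g - u'‖), hdiff, hε, norm_nonneg (g - u')]
  -- expand
  have hexp : (inner ℝ (q - m') u' : ℝ) = L + h * (inner ℝ g u' : ℝ) := by
    have hsplit : q - m' = (p - m') + h • g := by rw [hq]; abel
    rw [hsplit, inner_add_left, real_inner_smul_left]
    congr 1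
    rw [hu', real_inner_smul_right, real_inner_self_eq_norm_sq]
    rw [hL]; field_simp
  have hub : (inner ℝ (q - m') u' : ℝ) ≤ ‖q - m'‖ := by
    calc (inner ℝ (q - m') u' : ℝ) ≤ ‖q - m'‖ * ‖u'‖ := real_inner_le_norm _ _
      _ = ‖q - m'‖ := by rw [hu'norm, mul_one]
  have hfinal : Metric.infDist q M = ‖q - m'‖ := by rw [hdist', dist_eq_norm]
  rw [hfinal]
  have : L + h * (1 - ε) ≤ L + h * (inner ℝ g u' : ℝ) := by
    have := mul_le_mul_of_nonneg_left hip hh.le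
    linarith
  linarith [hexp ▸ hub, hLδ]

end ReachAux

namespace ReachAux

variable {M : Set (EuclideanSpace ℝ (Fin D))}

lemma grow (hMc : IsCompact M) (hMne : M.Nonempty) (hτ : 0 < reach M)
    {y : EuclideanSpace ℝ (Fin D)} (h0 : 0 < Metric.infDist y M) {T : ℝ} (hT : 0 ≤ T)
    (hsum : Metric.infDist y M + T < reach M) {ε : ℝ} (hε : 0 < ε) (hε1 : ε < 1) :
    ∃ c, dist y c ≤ T ∧ Metric.infDist y M + (1 - ε) * T ≤ Metric.infDist c M := by
  set δ₀ := Metric.infDist y M with hδ₀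
  set C := {c : EuclideanSpace ℝ (Fin D) | dist y c ≤ T} ∩
    {c : EuclideanSpace ℝ (Fin D) | δ₀ + (1 - ε) * dist y c ≤ Metric.infDist c M} with hCdef
  have hCclosed : IsClosed C := by
    apply IsClosed.inter
    · exact isClosed_le (Continuous.dist continuous_const continuous_id) continuous_const
    · exact isClosed_le (by fun_prop) (Metric.continuous_infDist_pt M)
  have hCc : IsCompact C :=
    (isCompact_closedBall y T).of_isClosed_subset hCclosed
      (fun c hc => by
        rw [Metric.mem_closedBall, dist_comm]
        exact hc.1)
  have hCne : C.Nonempty := ⟨y, by simpa using hT, by simp [hδ₀]⟩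
  obtain ⟨c, hcC, hmax⟩ := hCc.exists_isMaxOn hCne ((Metric.continuous_infDist_pt M).continuousOn)
  by_cases hcase : δ₀ + (1 - ε) * T ≤ Metric.infDist c M
  · exact ⟨c, hcC.1, hcase⟩
  exfalso
  push_neg at hcase
  have hεpos : (0:ℝ) < 1 - ε := by linarith
  have hc2 := hcC.2
  simp only [Set.mem_setOf_eq] at hc2
  have hdyc : dist y c < T := by nlinarith [hc2]
  have hcpos : 0 < Metric.infDist c M :=
    lt_of_lt_of_le h0 (le_trans (by nlinarith [dist_nonneg (x := y) (y := c)]) hc2)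
  have hcreach : Metric.infDist c M < reach M := by
    have h5 : Metric.infDist c M ≤ δ₀ + dist c y := Metric.infDist_le_infDist_add_dist
    rw [dist_comm] at h5
    linarith
  obtain ⟨m, hmM, hdistm⟩ := hMc.exists_infDist_eq_dist hMne c
  obtain ⟨h₀, hh₀, hstep⟩ := step_lemma hMc hMne hτ hcreach hcpos hmM hdistm.symm hε hε1
  set h := min h₀ (T - dist y c) with hhdef
  have hhpos : 0 < h := lt_min hh₀ (by linarith)
  set g := (Metric.infDist c M)⁻¹ • (c - m) with hgdef
  set c' := c + h • g with hc'def
  have hstep' := hstep h hhpos (min_le_left _ _)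
  have hgnorm : ‖g‖ = 1 := by
    have hpm : ‖c - m‖ = Metric.infDist c M := by rw [← dist_eq_norm]; exact hdistm.symm
    rw [hgdef, norm_smul, hpm, Real.norm_eq_abs, abs_inv, abs_of_pos hcpos,
      inv_mul_cancel₀ (ne_of_gt hcpos)]
  have hcc' : dist c c' = h := by
    rw [hc'def, dist_eq_norm]
    simp [norm_smul, hgnorm, abs_of_pos hhpos]
  have hdyc' : dist y c' ≤ dist y c + h := by
    calc dist y c' ≤ dist y c + dist c c' := dist_triangle _ _ _
      _ = dist y c + h := by rw [hcc']
  have hc'C : c' ∈ C := by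
    constructor
    · simp only [Set.mem_setOf_eq]
      have : h ≤ T - dist y c := min_le_right _ _
      linarith
    · simp only [Set.mem_setOf_eq]
      have h6 : Metric.infDist c M + (1 - ε) * h ≤ Metric.infDist c' M := hstep'
      have h7 : δ₀ + (1 - ε) * dist y c' ≤ δ₀ + (1 - ε) * (dist y c + h) := by
        linarith [mul_le_mul_of_nonneg_left hdyc' hεpos.le]
      nlinarith [hc2]
  have h8 : Metric.infDist c' M ≤ Metric.infDist c M := hmax hc'C
  nlinarith [hstep']

end ReachAux

namespace ReachAux

variable {M : Set (EuclideanSpace ℝ (Fin D))}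

lemma key_estimate (hMc : IsCompact M) (hMne : M.Nonempty) (hτ : 0 < reach M)
    {σ : Set (EuclideanSpace ℝ (Fin D))} (hσ : σ ⊆ M)
    {z : EuclideanSpace ℝ (Fin D)} {r' τ'' : ℝ}
    (henc : σ ⊆ Metric.closedBall z r') (hτ2 : τ'' < reach M)
    {w : EuclideanSpace ℝ (Fin D)} (hw : w ∈ convexHull ℝ σ)
    (hwτ : Metric.infDist w M < τ'') :
    2 * Metric.infDist w M * τ'' - (Metric.infDist w M)^2 ≤ r'^2 := by
  set δ₀ := Metric.infDist w M with hδ₀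
  rcases eq_or_lt_of_le (Metric.infDist_nonneg : (0:ℝ) ≤ δ₀) with h0 | h0
  · rw [hδ₀, ← h0]; simpa using sq_nonneg r'
  set T := τ'' - δ₀ with hTdef
  have hT : 0 < T := by simp only [hTdef]; linarith
  have H : ∀ ε : ℝ, 0 < ε → ε < 1 → (δ₀ + (1-ε)*T)^2 - T^2 ≤ r'^2 := by
    intro ε hε hε1
    obtain ⟨c, hdc, hδc⟩ := grow hMc hMne hτ h0 hT.le (by simp only [hTdef]; linarith) hε hε1
    set R := δ₀ + (1-ε)*T with hRdef
    have hR0 : 0 ≤ R := by nlinarith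
    have hσsub : σ ⊆ {v : EuclideanSpace ℝ (Fin D) |
        R^2 - r'^2 - ‖c‖^2 + ‖z‖^2 ≤ 2 * (inner ℝ v (z - c) : ℝ)} := by
      intro x hx
      simp only [Set.mem_setOf_eq]
      have h1 : R ≤ dist x c := by
        calc R ≤ Metric.infDist c M := hδc
          _ ≤ dist c x := Metric.infDist_le_dist_of_mem (hσ hx)
          _ = dist x c := dist_comm _ _
      have h2 : dist x z ≤ r' := by
        have := henc hx
        rwa [Metric.mem_closedBall] at this
      have e1 : R^2 ≤ ‖x - c‖^2 := by
        rw [← dist_eq_norm]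
        exact pow_le_pow_left₀ hR0 h1 2
      have e2 : ‖x - z‖^2 ≤ r'^2 := by
        rw [← dist_eq_norm]
        exact pow_le_pow_left₀ dist_nonneg h2 2
      have expand : ‖x - c‖^2 - ‖x - z‖^2 = ‖c‖^2 - ‖z‖^2 + 2*(inner ℝ x (z - c) : ℝ) := by
        rw [norm_sub_sq_real, norm_sub_sq_real, inner_sub_right]; ring
      linarith
    have hlin : IsLinearMap ℝ (fun v : EuclideanSpace ℝ (Fin D) => 2 * (inner ℝ v (z - c) : ℝ)) := by
      constructor
      · intro a b; rw [inner_add_left]; ring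
      · intro t a; rw [real_inner_smul_left]; simp [smul_eq_mul]; ring
    have hconv : Convex ℝ {v : EuclideanSpace ℝ (Fin D) |
        R^2 - r'^2 - ‖c‖^2 + ‖z‖^2 ≤ 2 * (inner ℝ v (z - c) : ℝ)} :=
      convex_halfSpace_ge hlin _
    have hwH := convexHull_min hσsub hconv hw
    simp only [Set.mem_setOf_eq] at hwH
    have expandw : ‖w - c‖^2 - ‖w - z‖^2 = ‖c‖^2 - ‖z‖^2 + 2*(inner ℝ w (z - c) : ℝ) := by
      rw [norm_sub_sq_real, norm_sub_sq_real, inner_sub_right]; ring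
    have hwc : ‖w - c‖ ≤ T := by rw [← dist_eq_norm]; exact hdc
    have hwc2 : ‖w - c‖^2 ≤ T^2 := pow_le_pow_left₀ (norm_nonneg _) hwc 2
    nlinarith [sq_nonneg ‖w - z‖]
  have H2 : δ₀^2 + 2*δ₀*T ≤ r'^2 := by
    refine le_of_forall_pos_le_add fun e he => ?_
    set ε := min (1/2) (e / (2*T*(δ₀+T) + 1)) with hεdef
    have hε : 0 < ε := lt_min one_half_pos (by positivity)
    have hε1 : ε < 1 := lt_of_le_of_lt (min_le_left _ _) (by norm_num)
    have h3 := H ε hε hε1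
    have h4 : ε ≤ e / (2*T*(δ₀+T) + 1) := min_le_right _ _
    have h5 : ε * (2*T*(δ₀+T) + 1) ≤ e := by
      rw [← le_div_iff₀ (by positivity)]
      exact h4
    nlinarith [hε.le, hT.le, h0.le, sq_nonneg (ε*T)]
  nlinarith [H2]

end ReachAux

namespace ReachAux

variable {M : Set (EuclideanSpace ℝ (Fin D))}

lemma hull_bound (hMc : IsCompact M) (hMne : M.Nonempty) (hτ : 0 < reach M)
    {σ : Set (EuclideanSpace ℝ (Fin D))} (hσ : σ ⊆ M)
    {x₀ : EuclideanSpace ℝ (Fin D)} (hx₀ : x₀ ∈ σ)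
    {z : EuclideanSpace ℝ (Fin D)} {r' τ'' : ℝ}
    (henc : σ ⊆ Metric.closedBall z r') (h1 : r' < τ'') (h2 : τ'' < reach M)
    {y : EuclideanSpace ℝ (Fin D)} (hy : y ∈ convexHull ℝ σ) :
    Metric.infDist y M ≤ τ'' - Real.sqrt (τ''^2 - r'^2) := by
  have hr'0 : 0 ≤ r' := by
    have := henc hx₀
    rw [Metric.mem_closedBall] at this
    exact le_trans dist_nonneg this
  have hτ''0 : 0 < τ'' := lt_of_le_of_lt hr'0 h1
  set B := τ'' - Real.sqrt (τ''^2 - r'^2) with hB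
  have hsq_pos : 0 < τ''^2 - r'^2 := by nlinarith
  have hBlt : B < τ'' := by
    have : 0 < Real.sqrt (τ''^2 - r'^2) := Real.sqrt_pos.2 hsq_pos
    simp only [hB]; linarith
  have hB0 : 0 ≤ B := by
    have h3 := Real.sqrt_le_sqrt (show τ''^2 - r'^2 ≤ τ''^2 by nlinarith)
    rw [Real.sqrt_sq hτ''0.le] at h3
    simp only [hB]; linarith
  have claimA : ∀ w ∈ convexHull ℝ σ, Metric.infDist w M < τ'' → Metric.infDist w M ≤ B := by
    intro w hw hwτ
    have hkey := key_estimate hMc hMne hτ hσ henc h2 hw hwτ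
    set δ := Metric.infDist w M with hδ
    have hδ0 : 0 ≤ δ := Metric.infDist_nonneg
    have h5 : τ''^2 - r'^2 ≤ (τ'' - δ)^2 := by nlinarith
    have h6 : Real.sqrt (τ''^2 - r'^2) ≤ τ'' - δ := by
      have h7 := Real.sqrt_le_sqrt h5
      rwa [Real.sqrt_sq (by linarith : (0:ℝ) ≤ τ'' - δ)] at h7
    simp only [hB]; linarith
  by_contra hcon
  push_neg at hcon
  have hyτ : τ'' ≤ Metric.infDist y M := by
    by_contra hlt
    push_neg at hlt
    exact absurd (claimA y hy hlt) (not_le.2 hcon)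
  set f : ℝ → ℝ := fun t => Metric.infDist (x₀ + t • (y - x₀)) M with hf
  have hfc : ContinuousOn f (Set.Icc 0 1) := by
    apply Continuous.continuousOn
    exact (Metric.continuous_infDist_pt M).comp
      (continuous_const.add (continuous_id.smul continuous_const))
  have hf0 : f 0 = 0 := by
    simp only [hf, zero_smul, add_zero]
    exact Metric.infDist_zero_of_mem (hσ hx₀)
  have hf1 : f 1 = Metric.infDist y M := by
    simp only [hf, one_smul]
    congr 1
    abel
  set v := (B + τ'')/2 with hv
  have hvmem : v ∈ Set.Icc (f 0) (f 1) := by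
    rw [hf0, hf1]
    constructor
    · simp only [hv]; linarith
    · simp only [hv]; linarith
  obtain ⟨t, ht, hft⟩ := intermediate_value_Icc zero_le_one hfc hvmem
  set w := x₀ + t • (y - x₀) with hw
  have hwhull : w ∈ convexHull ℝ σ := by
    have hcomb := (convex_convexHull ℝ σ) (subset_convexHull ℝ σ hx₀) hy
      (by linarith [ht.2] : (0:ℝ) ≤ 1 - t) ht.1 (by ring)
    have hrw : (1 - t) • x₀ + t • y = x₀ + t • (y - x₀) := by
      rw [sub_smul, one_smul, smul_sub]
      abel
    rw [hw, ← hrw]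
    exact hcomb
  have hfw : Metric.infDist w M = v := hft
  have hwτ : Metric.infDist w M < τ'' := by rw [hfw]; simp only [hv]; linarith
  have := claimA w hwhull hwτ
  rw [hfw] at this
  simp only [hv] at this
  linarith

end ReachAux

/-- For `σ ⊆ M` with `r(σ) < τ(M)`, every `y ∈ Conv(σ)` satisfies
`d(y,M) ≤ τ(M)(1 − √(1 − r(σ)²/τ(M)²)) ≤ (r(σ)²/(2τ(M)))(1 + r(σ)²/τ(M)²)`. -/
theorem infDist_convexHull_le {D d : ℕ} (M : Set (EuclideanSpace ℝ (Fin D)))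
    (hMc : IsCompact M) (hM : IsC2Submanifold d M) (hτ : 0 < reach M)
    (σ : Set (EuclideanSpace ℝ (Fin D))) (hσ : σ ⊆ M) (hr : sebRadius σ < reach M)
    (y : EuclideanSpace ℝ (Fin D)) (hy : y ∈ convexHull ℝ σ) :
    Metric.infDist y M ≤ reach M * (1 - Real.sqrt (1 - sebRadius σ ^ 2 / reach M ^ 2)) ∧
    reach M * (1 - Real.sqrt (1 - sebRadius σ ^ 2 / reach M ^ 2)) ≤
      sebRadius σ ^ 2 / (2 * reach M) * (1 + sebRadius σ ^ 2 / reach M ^ 2) := by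
  have hσne : σ.Nonempty := by
    rcases Set.eq_empty_or_nonempty σ with h | h
    · rw [h, convexHull_empty] at hy
      exact absurd hy (Set.notMem_empty y)
    · exact h
  obtain ⟨x₀, hx₀⟩ := hσne
  have hMne : M.Nonempty := ⟨x₀, hσ hx₀⟩
  set τ := reach M with hτdef
  set r := sebRadius σ with hrdef
  have hSne : {ρ : ℝ | ∃ z : EuclideanSpace ℝ (Fin D), σ ⊆ Metric.closedBall z ρ}.Nonempty := by
    obtain ⟨R, hR⟩ := hMc.isBounded.subset_closedBall 0
    exact ⟨R, 0, fun x hx => hR (hσ hx)⟩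
  have hr0 : 0 ≤ r := by
    rw [hrdef]
    apply le_csInf hSne
    rintro b ⟨z, hz⟩
    have := hz hx₀
    rw [Metric.mem_closedBall] at this
    exact le_trans dist_nonneg this
  have hτ0 : 0 < τ := hτ
  have hrτ : r < τ := hr
  -- main geometric bound
  have main : Metric.infDist y M ≤ τ - Real.sqrt (τ^2 - r^2) := by
    have hev : ∀ e ∈ Set.Ioo (0:ℝ) ((τ - r)/2),
        Metric.infDist y M ≤ (τ - e) - Real.sqrt ((τ - e)^2 - (r + e)^2) := by
      rintro e ⟨he0, he1⟩
      obtain ⟨r', hr'S, hr'lt⟩ := exists_lt_of_csInf_lt hSne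
        (show sebRadius σ < r + e by rw [← hrdef]; linarith)
      obtain ⟨z, hz⟩ := hr'S
      have hr'0 : 0 ≤ r' := by
        have := hz hx₀
        rw [Metric.mem_closedBall] at this
        exact le_trans dist_nonneg this
      have hstep1 : r' < τ - e := by linarith
      have hstep2 : τ - e < τ := by linarith
      have hbd := ReachAux.hull_bound hMc hMne hτ hσ hx₀ hz hstep1 (by rw [← hτdef]; exact hstep2) hy
      have hmono : Real.sqrt ((τ - e)^2 - (r + e)^2) ≤ Real.sqrt ((τ - e)^2 - r'^2) := by
        apply Real.sqrt_le_sqrt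
        have : r'^2 ≤ (r + e)^2 := pow_le_pow_left₀ hr'0 hr'lt.le 2
        linarith
      linarith
    have hlim : Filter.Tendsto (fun e => (τ - e) - Real.sqrt ((τ - e)^2 - (r + e)^2))
        (nhdsWithin 0 (Set.Ioi 0)) (nhds (τ - Real.sqrt (τ^2 - r^2))) := by
      have hc : Continuous fun e : ℝ => (τ - e) - Real.sqrt ((τ - e)^2 - (r + e)^2) := by
        apply Continuous.sub (continuous_const.sub continuous_id)
        apply Real.continuous_sqrt.comp
        fun_prop
      have h4 := (hc.tendsto 0).mono_left
        (nhdsWithin_le_nhds (s := Set.Ioi (0:ℝ)))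
      simpa using h4
    refine ge_of_tendsto hlim ?_
    filter_upwards [Ioo_mem_nhdsGT_of_mem
      (show (0:ℝ) ∈ Set.Ico 0 ((τ - r)/2) from ⟨le_refl 0, by linarith⟩)] with e he
    exact hev e he
  have hr2τ2 : r^2 ≤ τ^2 := by nlinarith
  have hueq : (1:ℝ) - r^2/τ^2 = (τ^2 - r^2)/τ^2 := by field_simp
  have heq : τ * (1 - Real.sqrt (1 - r^2/τ^2)) = τ - Real.sqrt (τ^2 - r^2) := by
    rw [hueq, Real.sqrt_div (by nlinarith : (0:ℝ) ≤ τ^2 - r^2), Real.sqrt_sq hτ0.le]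
    field_simp
  constructor
  · rw [heq]
    exact main
  · set s := Real.sqrt (1 - r^2/τ^2) with hs
    have hs2 : s^2 = 1 - r^2/τ^2 := Real.sq_sqrt
      (by rw [hueq]; exact div_nonneg (by nlinarith) (by positivity))
    have hs0 : 0 ≤ s := Real.sqrt_nonneg _
    have hdivnn : (0:ℝ) ≤ r^2/τ^2 := by positivity
    have hs1 : s ≤ 1 := by nlinarith [hs2, hdivnn]
    have hr2 : r^2/τ^2 = 1 - s^2 := by linarith
    have hcore : (1:ℝ) - s ≤ ((1 - s^2)/2) * (1 + (1 - s^2)) := by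
      nlinarith [mul_nonneg (mul_nonneg hs0 (sq_nonneg (1 - s))) (by linarith : (0:ℝ) ≤ s + 2)]
    have hrhs : r^2 / (2*τ) * (1 + r^2/τ^2) = τ * (((1 - s^2)/2) * (1 + (1 - s^2))) := by
      have hr2' : r^2 = (1 - s^2) * τ^2 := by
        rw [← hr2]; field_simp
      rw [hr2']
      field_simp
    rw [hrhs]
    exact mul_le_mul_of_nonneg_left hcore hτ0.le
end
end

section
/- Let M be a compact C² submanifold of ℝ^D with reach τ(M) > 0, let A ⊆ M, and let t ≥ 0. Then the asymmetric Hausdorff distance from the t-convex hull Conv(t, A) to M satisfies d_H(Conv(t, A) | M) ≤ (t²/(2τ(M)))·min(1 + t²/τ(M)², 2) ≤ t²/τ(M). -/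
open Metric Set

noncomputable section

variable {D d : ℕ}

-- ============ auxiliary development ============
open RealInnerProductSpace

namespace TCMAux

variable {M : Set (EuclideanSpace ℝ (Fin D))}

/-- The convex potential `x ↦ (‖x‖² - d(x,M)²)/2`. -/
def fM (M : Set (EuclideanSpace ℝ (Fin D))) (x : EuclideanSpace ℝ (Fin D)) : ℝ :=
  (‖x‖^2 - Metric.infDist x M ^ 2)/2

lemma le_fM {a x : EuclideanSpace ℝ (Fin D)} (ha : a ∈ M) :
    ⟪x, a⟫ - ‖a‖^2/2 ≤ fM M x := by
  have h := Metric.infDist_le_dist_of_mem (x := x) ha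
  have h0 : (0:ℝ) ≤ Metric.infDist x M := Metric.infDist_nonneg
  have h1 : dist x a = ‖x - a‖ := dist_eq_norm x a
  have h2 : ‖x - a‖^2 = ‖x‖^2 - 2*⟪x,a⟫ + ‖a‖^2 := norm_sub_sq_real x a
  unfold fM
  nlinarith [h, h0]

lemma fM_eq {a x : EuclideanSpace ℝ (Fin D)} (ha : a ∈ M)
    (h : Metric.infDist x M = dist x a) : fM M x = ⟪x, a⟫ - ‖a‖^2/2 := by
  have h2 : ‖x - a‖^2 = ‖x‖^2 - 2*⟪x,a⟫ + ‖a‖^2 := norm_sub_sq_real x a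
  unfold fM
  rw [h, dist_eq_norm]
  nlinarith [h2]

lemma subgrad_of_nearest {a y : EuclideanSpace ℝ (Fin D)} (ha : a ∈ M)
    (h : Metric.infDist y M = dist y a) :
    ∀ w, fM M y + ⟪a, w - y⟫ ≤ fM M w := by
  intro w
  have h1 := le_fM (x := w) ha
  have h3 : ⟪a, w - y⟫ = ⟪w, a⟫ - ⟪y, a⟫ := by
    rw [inner_sub_right, real_inner_comm a w, real_inner_comm a y]
  rw [fM_eq ha h]
  linarith

lemma fM_combo (hMc : IsCompact M) (hne : M.Nonempty)
    {a b : EuclideanSpace ℝ (Fin D)} {μ ν : ℝ} (hμ : 0 ≤ μ) (hν : 0 ≤ ν) (hs : μ + ν = 1) :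
    fM M (μ•a + ν•b) ≤ μ * fM M a + ν * fM M b := by
  obtain ⟨c, hc, hdc⟩ := hMc.exists_infDist_eq_dist hne (μ•a + ν•b)
  rw [fM_eq hc hdc]
  have h1 := le_fM (x := a) hc
  have h2 := le_fM (x := b) hc
  have hin : ⟪μ•a + ν•b, c⟫ = μ*⟪a,c⟫ + ν*⟪b,c⟫ := by
    rw [inner_add_left, real_inner_smul_left, real_inner_smul_left]
  rw [hin]
  nlinarith [mul_le_mul_of_nonneg_left h1 hμ, mul_le_mul_of_nonneg_left h2 hν]


lemma fM_continuous : Continuous (fM M) := by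
  unfold fM
  exact (((continuous_norm.pow 2).sub ((Metric.continuous_infDist_pt M).pow 2)).div_const 2)

/-- Proximal point / Minty: every point `z` is of the form `y + p` with `p` a subgradient
of `fM` at `y`. -/
lemma exists_prox (hMc : IsCompact M) (hne : M.Nonempty) (z : EuclideanSpace ℝ (Fin D)) :
    ∃ y : EuclideanSpace ℝ (Fin D), ∀ w, fM M y + ⟪z - y, w - y⟫ ≤ fM M w := by
  classical
  obtain ⟨a₀, ha₀⟩ := hne
  set g : EuclideanSpace ℝ (Fin D) → ℝ := fun w => fM M w + ‖w - z‖^2/2 with hg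
  have hgc : Continuous g := by
    apply fM_continuous.add
    exact ((continuous_norm.comp (continuous_id.sub continuous_const)).pow 2).div_const 2
  have hlb : ∀ w : EuclideanSpace ℝ (Fin D), -(‖a₀‖ * ‖w‖) - ‖a₀‖^2/2 ≤ fM M w := by
    intro w
    have h1 : Metric.infDist w M ≤ ‖w‖ + ‖a₀‖ := by
      refine le_trans (Metric.infDist_le_dist_of_mem ha₀) ?_
      rw [dist_eq_norm]
      exact le_trans (norm_sub_le _ _) (by rfl)
    have h0 : (0:ℝ) ≤ Metric.infDist w M := Metric.infDist_nonneg
    unfold fM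
    nlinarith [norm_nonneg w, norm_nonneg a₀]
  obtain ⟨Q, hQ⟩ : ∃ Q : ℝ, Q = ‖a₀‖*‖z‖ + ‖a₀‖^2/2 + |fM M z| + 1 := ⟨_, rfl⟩
  have hQ1 : 1 ≤ Q := by
    have := norm_nonneg a₀
    have := norm_nonneg z
    have := abs_nonneg (fM M z)
    nlinarith [mul_nonneg (norm_nonneg a₀) (norm_nonneg z), sq_nonneg ‖a₀‖]
  obtain ⟨ϱ, hϱ⟩ : ∃ r : ℝ, r = 2*‖a₀‖ + 2*Q := ⟨_, rfl⟩
  have hϱ0 : 0 < ϱ := by nlinarith [norm_nonneg a₀]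
  obtain ⟨y, hyK, hymin⟩ := (isCompact_closedBall z ϱ).exists_isMinOn
    ⟨z, mem_closedBall_self hϱ0.le⟩ hgc.continuousOn
  have hglob : ∀ w, g y ≤ g w := by
    intro w
    by_cases hw : w ∈ Metric.closedBall z ϱ
    · exact hymin hw
    · have hr : ϱ < dist w z := by
        simp only [Metric.mem_closedBall, not_le] at hw
        exact hw
      have hgyz : g y ≤ g z := hymin (mem_closedBall_self hϱ0.le)
      have hgz : g z = fM M z := by simp [hg]
      have hwn : ‖w‖ ≤ dist w z + ‖z‖ := by
        rw [dist_eq_norm]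
        calc ‖w‖ = ‖(w - z) + z‖ := by rw [sub_add_cancel]
        _ ≤ ‖w - z‖ + ‖z‖ := norm_add_le _ _
      have hdn : ‖w - z‖ = dist w z := (dist_eq_norm w z).symm
      have h3 := hlb w
      have hfz : fM M z ≤ |fM M z| := le_abs_self _
      have hrpos : 0 < dist w z := lt_trans hϱ0 hr
      have h6 : Q < dist w z / 2 - ‖a₀‖ := by linarith [norm_nonneg a₀]
      have h7 : dist w z * Q < dist w z * (dist w z/2 - ‖a₀‖) :=
        mul_lt_mul_of_pos_left h6 hrpos
      have h8 : 2*Q ≤ dist w z * Q := by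
        have h9 : 2 ≤ dist w z := by nlinarith [norm_nonneg a₀]
        nlinarith
      have key : g z < g w := by
        rw [hgz, hg]
        simp only
        rw [hdn]
        have h10 := mul_le_mul_of_nonneg_left hwn (norm_nonneg a₀)
        nlinarith [h3, h7, h8, h10, hfz, hQ1]
      linarith
  refine ⟨y, fun w => ?_⟩
  set L : ℝ := fM M y + ⟪z - y, w - y⟫ - fM M w with hL
  have key : ∀ t : ℝ, 0 < t → t ≤ 1 → L ≤ t*(‖w - y‖^2/2) := by
    intro t ht0 ht1
    have hcombo := fM_combo (a := y) (b := w) (μ := 1 - t) (ν := t) hMc ⟨a₀, ha₀⟩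
      (by linarith) ht0.le (by ring)
    have hmin := hglob ((1-t)•y + t•w)
    have hpt : ((1-t)•y + t•w) - z = (y - z) + t•(w - y) := by
      rw [sub_smul, one_smul, smul_sub]
      abel
    have hexp : ‖((1-t)•y + t•w) - z‖^2
        = ‖y - z‖^2 + 2*(t*⟪y - z, w - y⟫) + t^2*‖w - y‖^2 := by
      rw [hpt, norm_add_sq_real, real_inner_smul_right, norm_smul]
      rw [Real.norm_eq_abs, abs_of_pos ht0]
      ring
    have hzy : ⟪z - y, w - y⟫ = -⟪y - z, w - y⟫ := by
      rw [← neg_sub y z, inner_neg_left]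
    have hstep : t * L ≤ t * (t * (‖w - y‖^2/2)) := by
      have h1 : g y ≤ g ((1-t)•y + t•w) := hglob _
      rw [hg] at h1
      simp only at h1
      rw [hexp] at h1
      rw [hL, hzy]
      nlinarith [hcombo, h1]
    exact le_of_mul_le_mul_left (by linarith [hstep]) ht0
  have hL0 : L ≤ 0 := by
    by_contra hc
    push_neg at hc
    have ht0 : 0 < min 1 (L/(‖w - y‖^2 + 1)) := by
      apply lt_min one_pos
      positivity
    have := key _ ht0 (min_le_left _ _)
    have h2 : min 1 (L/(‖w - y‖^2 + 1)) ≤ L/(‖w - y‖^2 + 1) := min_le_right _ _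
    have h3 : (0:ℝ) < ‖w - y‖^2 + 1 := by positivity
    have h4 : min 1 (L/(‖w - y‖^2 + 1)) * (‖w - y‖^2/2) ≤ (L/(‖w - y‖^2 + 1)) * (‖w - y‖^2/2) := by
      apply mul_le_mul_of_nonneg_right h2 (by positivity)
    have h5 : (L/(‖w - y‖^2 + 1)) * (‖w - y‖^2/2) < L := by
      rw [div_mul_eq_mul_div, div_lt_iff₀ h3]
      nlinarith [sq_nonneg ‖w - y‖]
    linarith
  rw [hL] at hL0
  linarith

lemma reach_prop : ∀ x : EuclideanSpace ℝ (Fin D), Metric.infDist x M < reach M → uniqueProj M x := by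
  intro x hx
  have hS : {r : ℝ | ∀ x : EuclideanSpace ℝ (Fin D), Metric.infDist x M < r → uniqueProj M x}.Nonempty :=
    ⟨0, fun x hx => absurd hx (not_lt.mpr Metric.infDist_nonneg)⟩
  obtain ⟨r, hrS, hr⟩ := exists_lt_of_lt_csSup hS hx
  exact hrS x hr

lemma nearest_unique {x a b : EuclideanSpace ℝ (Fin D)} (hu : uniqueProj M x)
    (ha : a ∈ M) (hda : Metric.infDist x M = dist x a)
    (hb : b ∈ M) (hdb : Metric.infDist x M = dist x b) : a = b := by
  obtain ⟨c, _, huniq⟩ := hu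
  rw [huniq a ⟨ha, hda.symm⟩, huniq b ⟨hb, hdb.symm⟩]


/-- Continuity of the nearest-point projection at a point with unique projection. -/
lemma projcont (hMc : IsCompact M) {y m : EuclideanSpace ℝ (Fin D)}
    (hy : Metric.infDist y M < reach M) (hm : m ∈ M)
    (hdm : Metric.infDist y M = dist y m) :
    ∀ η > (0:ℝ), ∃ ρ > (0:ℝ), ∀ x a, dist x y ≤ ρ → a ∈ M →
      Metric.infDist x M = dist x a → dist a m ≤ η := by
  intro η hη
  by_contra hc
  push_neg at hc
  have hseq : ∀ k : ℕ, ∃ xa : EuclideanSpace ℝ (Fin D) × EuclideanSpace ℝ (Fin D),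
      dist xa.1 y ≤ 1/(k+1) ∧ xa.2 ∈ M ∧ Metric.infDist xa.1 M = dist xa.1 xa.2 ∧
      η < dist xa.2 m := by
    intro k
    obtain ⟨x, a, h1, h2, h3, h4⟩ := hc (1/(k+1)) (by positivity)
    exact ⟨(x, a), h1, h2, h3, h4⟩
  choose u hu1 hu2 hu3 hu4 using hseq
  obtain ⟨astar, haM, φ, hφ, hconv⟩ := hMc.tendsto_subseq (x := fun k => (u k).2) hu2
  have hone : Filter.Tendsto (fun k : ℕ => 1/((k:ℝ)+1)) Filter.atTop (nhds 0) :=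
    tendsto_one_div_add_atTop_nhds_zero_nat
  have honeφ : Filter.Tendsto (fun k : ℕ => 1/((φ k : ℝ)+1)) Filter.atTop (nhds 0) :=
    hone.comp hφ.tendsto_atTop
  have h5 : Filter.Tendsto (fun k => dist y ((u (φ k)).2)) Filter.atTop (nhds (dist y astar)) :=
    Filter.Tendsto.dist tendsto_const_nhds hconv
  have hle : ∀ k, dist y ((u (φ k)).2) ≤ Metric.infDist y M + 2*(1/((φ k : ℝ)+1)) := by
    intro k
    have h6 := hu1 (φ k)
    have h7 : Metric.infDist ((u (φ k)).1) M ≤ Metric.infDist y M + dist ((u (φ k)).1) y :=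
      Metric.infDist_le_infDist_add_dist
    calc dist y ((u (φ k)).2) ≤ dist y ((u (φ k)).1) + dist ((u (φ k)).1) ((u (φ k)).2) :=
          dist_triangle _ _ _
      _ = dist ((u (φ k)).1) y + Metric.infDist ((u (φ k)).1) M := by
          rw [dist_comm, ← hu3 (φ k)]
      _ ≤ Metric.infDist y M + 2*(1/((φ k : ℝ)+1)) := by linarith
  have hge : ∀ k, Metric.infDist y M ≤ dist y ((u (φ k)).2) :=
    fun k => Metric.infDist_le_dist_of_mem (hu2 (φ k))
  have h6 : Filter.Tendsto (fun k : ℕ => Metric.infDist y M + 2*(1/((φ k : ℝ)+1)))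
      Filter.atTop (nhds (Metric.infDist y M)) := by
    have := (honeφ.const_mul 2).const_add (Metric.infDist y M)
    simpa using this
  have hda : dist y astar = Metric.infDist y M := by
    apply le_antisymm
    · exact le_of_tendsto_of_tendsto' h5 h6 hle
    · exact ge_of_tendsto' h5 hge
  have huq := reach_prop y hy
  have heq : astar = m := nearest_unique huq haM hda.symm hm hdm
  have h7 : Filter.Tendsto (fun k => dist ((u (φ k)).2) m) Filter.atTop (nhds (dist astar m)) :=
    Filter.Tendsto.dist hconv tendsto_const_nhds
  have h8 : η ≤ dist astar m := ge_of_tendsto' h7 (fun k => (hu4 (φ k)).le)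
  rw [heq, dist_self] at h8
  linarith

/-- A subgradient of `fM` at a point with `d(y) < reach M` is the nearest point. -/
lemma subgrad_mem (hMc : IsCompact M) (hne : M.Nonempty)
    {y p : EuclideanSpace ℝ (Fin D)} (hy : Metric.infDist y M < reach M)
    (hp : ∀ w, fM M y + ⟪p, w - y⟫ ≤ fM M w) :
    p ∈ M ∧ Metric.infDist y M = dist y p := by
  obtain ⟨m, hm, hdm⟩ := hMc.exists_infDist_eq_dist hne y
  suffices hpm : p = m by rw [hpm]; exact ⟨hm, hdm⟩
  by_contra hnem
  have hv0 : 0 < ‖p - m‖ := by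
    rw [norm_pos_iff, sub_ne_zero]
    exact hnem
  have key : ∀ η > (0:ℝ), ⟪p, p - m⟫ ≤ ⟪m, p - m⟫ + ‖p - m‖*η := by
    intro η hη
    obtain ⟨ρ, hρ, hcont⟩ := projcont hMc hy hm hdm η hη
    obtain ⟨t, htdef⟩ : ∃ t : ℝ, t = ρ/‖p - m‖ := ⟨_, rfl⟩
    have ht0 : 0 < t := by rw [htdef]; positivity
    obtain ⟨a, haM, hda⟩ := hMc.exists_infDist_eq_dist hne (y + t•(p - m))
    have hdxy : dist (y + t•(p - m)) y = ρ := by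
      rw [dist_eq_norm]
      have : y + t•(p - m) - y = t•(p - m) := by abel
      rw [this, norm_smul, Real.norm_eq_abs, abs_of_pos ht0, htdef]
      field_simp
    have hax : dist a m ≤ η := hcont _ a hdxy.le haM hda
    have h1 := hp (y + t•(p - m))
    have h2 : fM M (y + t•(p - m)) = ⟪y + t•(p - m), a⟫ - ‖a‖^2/2 := fM_eq haM hda
    have h3 : ⟪y, a⟫ - ‖a‖^2/2 ≤ fM M y := le_fM haM
    have h4 : ⟪p, (y + t•(p - m)) - y⟫ = t*⟪p, p - m⟫ := by
      have he : (y + t•(p - m)) - y = t•(p - m) := by abel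
      rw [he, real_inner_smul_right]
    have h5 : ⟪y + t•(p - m), a⟫ = ⟪y, a⟫ + t*⟪p - m, a⟫ := by
      rw [inner_add_left, real_inner_smul_left]
    have h6 : t*⟪p, p - m⟫ ≤ t*⟪p - m, a⟫ := by
      rw [h2, h5] at h1
      rw [h4] at h1
      linarith
    have h7 : ⟪p, p - m⟫ ≤ ⟪p - m, a⟫ := le_of_mul_le_mul_left (by linarith) ht0
    have h8 : ⟪p - m, a⟫ = ⟪m, p - m⟫ + ⟪p - m, a - m⟫ := by
      rw [inner_sub_right (𝕜 := ℝ) (p - m) a m, real_inner_comm m (p - m)]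
      ring
    have h9 : ⟪p - m, a - m⟫ ≤ ‖p - m‖*η := by
      refine le_trans (le_trans (le_abs_self _) (abs_real_inner_le_norm _ _)) ?_
      have : ‖a - m‖ ≤ η := by rw [← dist_eq_norm]; exact hax
      exact mul_le_mul_of_nonneg_left this (norm_nonneg _)
    linarith
  have hfin : ⟪p, p - m⟫ ≤ ⟪m, p - m⟫ := by
    apply le_of_forall_pos_le_add
    intro ε hε
    have := key (ε/‖p - m‖) (by positivity)
    have heq : ‖p - m‖*(ε/‖p - m‖) = ε := by field_simp
    linarith [heq ▸ this]
  have : ‖p - m‖^2 ≤ 0 := by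
    have h10 : ⟪p - m, p - m⟫ = ⟪p, p - m⟫ - ⟪m, p - m⟫ := inner_sub_left _ _ _
    have h11 : ⟪p - m, p - m⟫ = ‖p - m‖^2 := real_inner_self_eq_norm_sq _
    linarith
  nlinarith


set_option maxHeartbeats 1000000 in
/-- Key step: the normal segment on which `d(m + s n) = s` can be extended. -/
lemma minty_step (hMc : IsCompact M) (hne : M.Nonempty)
    {m n : EuclideanSpace ℝ (Fin D)} {s ε : ℝ} (hm : m ∈ M) (hn : ‖n‖ = 1)
    (hs : 0 < s) (hds : Metric.infDist (m + s•n) M = s)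
    (hε : 0 < ε) (hεs : ε ≤ s) (hR : s + 2*ε < reach M) :
    Metric.infDist (m + (s+ε)•n) M = s + ε := by
  obtain ⟨y, hy⟩ := exists_prox hMc hne ((m + (s+ε)•n) + m)
  obtain ⟨u, hu⟩ : ∃ u, u = y - (m + (s+ε)•n) := ⟨_, rfl⟩
  have hyu : y = (m + (s+ε)•n) + u := by rw [hu]; abel
  have hpu : (m + (s+ε)•n) + m - y = m - u := by rw [hu]; abel
  -- m is nearest point of m + s•n
  have hdcs : Metric.infDist (m + s•n) M = dist (m + s•n) m := by
    rw [hds, dist_eq_norm]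
    have he : m + s•n - m = s•n := by abel
    rw [he, norm_smul, Real.norm_eq_abs, abs_of_pos hs, hn, mul_one]
  have hsub_m := subgrad_of_nearest hm hdcs
  -- monotonicity of subgradients
  have h1 := hy (m + s•n)
  have h2 := hsub_m y
  have hmono : ⟪((m + (s+ε)•n) + m - y) - m, (m + s•n) - y⟫ ≤ 0 := by
    have e1 : ⟪((m + (s+ε)•n) + m - y) - m, (m + s•n) - y⟫
        = ⟪(m + (s+ε)•n) + m - y, (m + s•n) - y⟫ - ⟪m, (m + s•n) - y⟫ := inner_sub_left _ _ _
    have e2 : ⟪m, y - (m + s•n)⟫ = -⟪m, (m + s•n) - y⟫ := by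
      rw [← inner_neg_right]
      congr 1
      abel
    rw [e2] at h2
    linarith
  have hcsy : (m + s•n) - y = -(ε•n + u) := by
    rw [hyu, add_smul]
    abel
  have hpmu : ((m + (s+ε)•n) + m - y) - m = -u := by rw [hpu]; abel
  have key1 : ε*⟪n, u⟫ + ‖u‖^2 ≤ 0 := by
    have e3 : ⟪((m + (s+ε)•n) + m - y) - m, (m + s•n) - y⟫ = ε*⟪n, u⟫ + ‖u‖^2 := by
      rw [hpmu, hcsy, inner_neg_neg, inner_add_right, real_inner_smul_right,
        real_inner_self_eq_norm_sq, real_inner_comm u n]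
    linarith [e3 ▸ hmono]
  have hu_le : ‖u‖ ≤ ε := by
    have hcs : |⟪n, u⟫| ≤ ‖u‖ := by
      have := abs_real_inner_le_norm n u
      rwa [hn, one_mul] at this
    nlinarith [norm_nonneg u, neg_abs_le ⟪n, u⟫]
  -- y is within reach
  have hdy : Metric.infDist y M < reach M := by
    have h3 : Metric.infDist y M ≤ dist y m := Metric.infDist_le_dist_of_mem hm
    have h4 : dist y m = ‖(s+ε)•n + u‖ := by
      rw [dist_eq_norm, hyu]
      congr 1
      abel
    have h5 : ‖(s+ε)•n + u‖ ≤ (s+ε) + ‖u‖ := by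
      refine le_trans (norm_add_le _ _) ?_
      rw [norm_smul, Real.norm_eq_abs, abs_of_pos (by linarith), hn, mul_one]
    linarith
  obtain ⟨hpM, hdyp⟩ := subgrad_mem (y := y) (p := (m + (s+ε)•n) + m - y) hMc hne hdy hy
  -- ball inequality at m + s•n
  have hball : s ≤ dist (m + s•n) ((m + (s+ε)•n) + m - y) := by
    have hb := Metric.infDist_le_dist_of_mem (x := m + s•n) hpM
    rw [hds] at hb
    exact hb
  have key2 : 0 ≤ 2*s*⟪n, u⟫ + ‖u‖^2 := by
    have h3 : dist (m + s•n) ((m + (s+ε)•n) + m - y) = ‖s•n + u‖ := by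
      rw [dist_eq_norm, hpu]
      congr 1
      abel
    have h4 : ‖s•n + u‖^2 = s^2 + 2*s*⟪n, u⟫ + ‖u‖^2 := by
      rw [norm_add_sq_real, real_inner_smul_left, norm_smul, Real.norm_eq_abs,
        abs_of_pos hs, hn]
      ring
    nlinarith [hball, dist_nonneg (x := m + s•n) (y := (m + (s+ε)•n) + m - y), hs]
  have hu0 : u = 0 := by
    have h3 : ‖u‖^2 ≤ 0 := by nlinarith
    have h4 : ‖u‖ = 0 := by nlinarith [norm_nonneg u]
    exact norm_eq_zero.mp h4
  have hyc : y = m + (s+ε)•n := by rw [hyu, hu0]; abel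
  -- conclude
  have h5 := hy m
  rw [hyc] at h5
  have hpm2 : (m + (s+ε)•n) + m - (m + (s+ε)•n) = m := by abel
  rw [hpm2] at h5
  have hfm : fM M m = ‖m‖^2/2 := by
    unfold fM
    rw [Metric.infDist_zero_of_mem hm]
    ring
  have hcm : ‖(m + (s+ε)•n) - m‖ = s + ε := by
    have he : (m + (s+ε)•n) - m = (s+ε)•n := by abel
    rw [he, norm_smul, Real.norm_eq_abs, abs_of_pos (by linarith), hn, mul_one]
  have hd_le : Metric.infDist (m + (s+ε)•n) M ≤ s + ε := by
    refine le_trans (Metric.infDist_le_dist_of_mem hm) ?_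
    rw [dist_eq_norm, hcm]
  have hd_ge : s + ε ≤ Metric.infDist (m + (s+ε)•n) M := by
    have hexp : ⟪m, m - (m + (s+ε)•n)⟫ = ‖m‖^2 - ⟪m, m + (s+ε)•n⟫ := by
      rw [inner_sub_right, real_inner_self_eq_norm_sq]
    have hnc : ‖(m + (s+ε)•n) - m‖^2
        = ‖m + (s+ε)•n‖^2 - 2*⟪m + (s+ε)•n, m⟫ + ‖m‖^2 := norm_sub_sq_real _ _
    rw [hfm] at h5
    unfold fM at h5
    have hsq : (s+ε)^2 ≤ Metric.infDist (m + (s+ε)•n) M ^2 := by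
      have hcm2 : ‖(m + (s+ε)•n) - m‖^2 = (s+ε)^2 := by rw [hcm]
      nlinarith [real_inner_comm m (m + (s+ε)•n)]
    nlinarith [Metric.infDist_nonneg (x := m + (s+ε)•n) (s := M), hs, hε]
  linarith

/-- Federer-type extension: the normal distance relation extends up to the reach. -/
lemma extension (hMc : IsCompact M) (hne : M.Nonempty)
    {m n : EuclideanSpace ℝ (Fin D)} {δ₀ θ : ℝ} (hm : m ∈ M) (hn : ‖n‖ = 1)
    (h0 : 0 < δ₀) (hd : Metric.infDist (m + δ₀•n) M = δ₀)
    (hθ1 : δ₀ ≤ θ) (hθ2 : θ < reach M) :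
    Metric.infDist (m + θ•n) M = θ := by
  obtain ⟨T, hT⟩ : ∃ T : Set ℝ, T = {s : ℝ | s ∈ Icc δ₀ θ ∧ Metric.infDist (m + s•n) M = s} :=
    ⟨_, rfl⟩
  have hTne : T.Nonempty := ⟨δ₀, by rw [hT]; exact ⟨⟨le_refl _, hθ1⟩, hd⟩⟩
  have hTb : BddAbove T := ⟨θ, fun x hx => by rw [hT] at hx; exact hx.1.2⟩
  have hTc : IsClosed T := by
    have hcont : Continuous fun s : ℝ => Metric.infDist (m + s•n) M := by
      apply (Metric.continuous_infDist_pt M).comp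
      exact continuous_const.add (continuous_id.smul continuous_const)
    have : T = Icc δ₀ θ ∩ {s : ℝ | Metric.infDist (m + s•n) M = s} := by
      rw [hT]; ext x; simp [Set.mem_setOf_eq, Set.mem_inter_iff]
    rw [this]
    exact isClosed_Icc.inter (isClosed_eq hcont continuous_id)
  obtain ⟨s₀, hs₀def⟩ : ∃ s₀ : ℝ, s₀ = sSup T := ⟨_, rfl⟩
  have hs₀T : s₀ ∈ T := hs₀def ▸ hTc.csSup_mem hTne hTb
  rw [hT] at hs₀T
  obtain ⟨⟨hs₀1, hs₀2⟩, hs₀d⟩ := hs₀T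
  rcases eq_or_lt_of_le hs₀2 with heq | hlt
  · rw [← heq]; exact hs₀d
  · exfalso
    obtain ⟨ε, hεdef⟩ : ∃ ε : ℝ, ε = min (θ - s₀) (min (s₀) ((reach M - s₀)/4)) :=
      ⟨_, rfl⟩
    have hRs : s₀ < reach M := lt_of_le_of_lt hs₀2 hθ2
    have hε0 : 0 < ε := by
      rw [hεdef]
      exact lt_min (by linarith) (lt_min (by linarith) (by linarith))
    have hεs : ε ≤ s₀ := le_trans (hεdef ▸ min_le_right _ _) (min_le_left _ _)
    have hεR : s₀ + 2*ε < reach M := by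
      have := le_trans (hεdef ▸ min_le_right _ _) (min_le_right _ _)
      linarith
    have hstep := minty_step hMc hne hm hn (lt_of_lt_of_le h0 hs₀1) hs₀d hε0 hεs hεR
    have hmem : s₀ + ε ∈ T := by
      rw [hT]
      refine ⟨⟨by linarith, ?_⟩, hstep⟩
      have := hεdef ▸ min_le_left (θ - s₀) (min (s₀) ((reach M - s₀)/4))
      linarith
    have := le_csSup hTb hmem
    rw [← hs₀def] at this
    linarith


/-- If `σ ⊆ B(z,r)` and every point of `σ` is at distance `≥ ρ` from `c`, then for any
`y ∈ conv σ`: `ρ² ≤ r² - ‖z-y‖² + ‖c-y‖²`. -/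
lemma core_convex {σ : Set (EuclideanSpace ℝ (Fin D))} {y z c : EuclideanSpace ℝ (Fin D)}
    {r ρ : ℝ} (hy : y ∈ convexHull ℝ σ) (hσ : σ ⊆ Metric.closedBall z r)
    (hρ : ∀ a ∈ σ, ρ ≤ dist c a) (hρ0 : 0 ≤ ρ) :
    ρ^2 ≤ r^2 - ‖z - y‖^2 + ‖c - y‖^2 := by
  obtain ⟨κ, hκ⟩ : ∃ κ : ℝ, κ = ρ^2 - ‖c - y‖^2 - r^2 + ‖z - y‖^2 := ⟨_, rfl⟩
  have hlin : IsLinearMap ℝ (fun x : EuclideanSpace ℝ (Fin D) => 2*⟪x, z - c⟫) := by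
    constructor
    · intro a b; rw [inner_add_left]; ring
    · intro cc x; rw [real_inner_smul_left, smul_eq_mul]; ring
  have hhalf : convexHull ℝ σ ⊆ {x : EuclideanSpace ℝ (Fin D) | κ + 2*⟪y, z - c⟫ ≤ 2*⟪x, z - c⟫} := by
    apply convexHull_min
    · intro a ha
      have h1 : dist a z ≤ r := hσ ha
      have h2 : ρ ≤ dist c a := hρ a ha
      have e1 : dist c a ^2 = ‖a - y‖^2 - 2*⟪a - y, c - y⟫ + ‖c - y‖^2 := by
        have hd : dist c a = ‖(a - y) - (c - y)‖ := by
          rw [dist_eq_norm, ← norm_neg]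
          congr 1
          abel
        rw [hd, norm_sub_sq_real]
      have e2 : dist a z ^2 = ‖a - y‖^2 - 2*⟪a - y, z - y⟫ + ‖z - y‖^2 := by
        have hd : dist a z = ‖(a - y) - (z - y)‖ := by
          rw [dist_eq_norm]
          congr 1
          abel
        rw [hd, norm_sub_sq_real]
      have h3 : ρ^2 ≤ dist c a ^2 := by nlinarith [dist_nonneg (x := c) (y := a)]
      have h4 : dist a z ^2 ≤ r^2 := by nlinarith [dist_nonneg (x := a) (y := z)]
      have e3 : ⟪a - y, z - c⟫ = ⟪a - y, z - y⟫ - ⟪a - y, c - y⟫ := by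
        rw [← inner_sub_right]
        congr 1
        abel
      have e4 : ⟪a, z - c⟫ = ⟪a - y, z - c⟫ + ⟪y, z - c⟫ := by
        rw [← inner_add_left]
        congr 1
        abel
      simp only [Set.mem_setOf_eq]
      rw [e4, hκ]
      linarith
    · exact convex_halfSpace_ge hlin _
  have hyH := hhalf hy
  simp only [Set.mem_setOf_eq] at hyH
  rw [hκ] at hyH
  linarith

end TCMAux

set_option maxHeartbeats 2000000 in
open TCMAux in
/-- For `A ⊆ M` and `t ≥ 0`,
`d_H(Conv(t,A) | M) ≤ (t²/(2τ(M))) · min(1 + t²/τ(M)², 2) ≤ t²/τ(M)`. -/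
theorem tConv_close_to_manifold {D d : ℕ} (M : Set (EuclideanSpace ℝ (Fin D)))
    (hMc : IsCompact M) (hM : IsC2Submanifold d M) (hτ : 0 < reach M)
    (A : Set (EuclideanSpace ℝ (Fin D))) (hA : A ⊆ M) (t : ℝ) (ht : 0 ≤ t) :
    (∀ y ∈ tConv t A,
      Metric.infDist y M ≤ t ^ 2 / (2 * reach M) * min (1 + t ^ 2 / reach M ^ 2) 2) ∧
    t ^ 2 / (2 * reach M) * min (1 + t ^ 2 / reach M ^ 2) 2 ≤ t ^ 2 / reach M := by
  constructor
  · intro y hy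
    simp only [tConv, Set.mem_iUnion, Set.mem_setOf_eq, exists_prop] at hy
    obtain ⟨σ, ⟨hσA, hσr⟩, hyσ⟩ := hy
    have hσne : σ.Nonempty := by
      by_contra hc
      rw [Set.not_nonempty_iff_eq_empty] at hc
      rw [hc, convexHull_empty] at hyσ
      exact hyσ
    obtain ⟨a₀, ha₀σ⟩ := hσne
    have hMne : M.Nonempty := ⟨a₀, hA (hσA ha₀σ)⟩
    -- extraction of enclosing balls
    have hball : ∀ r' : ℝ, t < r' → ∃ z, σ ⊆ Metric.closedBall z r' := by
      intro r' hr'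
      have hSne : {r : ℝ | ∃ z : EuclideanSpace ℝ (Fin D), σ ⊆ Metric.closedBall z r}.Nonempty := by
        obtain ⟨rr, hrr⟩ := hMc.isBounded.subset_closedBall (0 : EuclideanSpace ℝ (Fin D))
        exact ⟨rr, 0, fun x hx => hrr (hA (hσA hx))⟩
      have hbb : BddBelow {r : ℝ | ∃ z : EuclideanSpace ℝ (Fin D), σ ⊆ Metric.closedBall z r} := by
        refine ⟨0, fun r hr => ?_⟩
        obtain ⟨z, hz⟩ := hr
        exact le_trans dist_nonneg (hz ha₀σ)
      have hlt : sInf {r : ℝ | ∃ z : EuclideanSpace ℝ (Fin D), σ ⊆ Metric.closedBall z r} < r' :=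
        lt_of_le_of_lt hσr hr'
      obtain ⟨r'', hr''S, hr''⟩ := (csInf_lt_iff hbb hSne).mp hlt
      obtain ⟨z, hz⟩ := hr''S
      exact ⟨z, hz.trans (Metric.closedBall_subset_closedBall hr''.le)⟩
    obtain ⟨δ, hδdef⟩ : ∃ w : ℝ, w = Metric.infDist y M := ⟨_, rfl⟩
    have hδ0 : (0:ℝ) ≤ δ := hδdef ▸ Metric.infDist_nonneg
    have hδa : ∀ a ∈ σ, δ ≤ dist y a := by
      intro a ha
      exact hδdef ▸ Metric.infDist_le_dist_of_mem (hA (hσA ha))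
    have hδt : δ ≤ t := by
      apply le_of_forall_pos_le_add
      intro ζ hζ
      obtain ⟨z, hz⟩ := hball (t + ζ) (by linarith)
      have hcc := core_convex (c := y) hyσ hz hδa hδ0
      simp only [sub_self, norm_zero] at hcc
      nlinarith [sq_nonneg ‖z - y‖, hζ.le, ht]
    have hmin0 : (0:ℝ) ≤ min (1 + t^2/reach M^2) 2 :=
      le_min (by positivity) (by norm_num)
    rw [← hδdef]
    rcases eq_or_lt_of_le hδ0 with h0 | hδpos
    · rw [← h0]
      exact mul_nonneg (by positivity) hmin0
    · rcases le_or_gt (reach M) t with hRt | htR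
      · -- t ≥ reach
        have hm2 : min (1 + t^2/reach M^2) 2 = 2 := by
          apply min_eq_right
          have h1 : 1 ≤ t^2/reach M^2 := by
            rw [le_div_iff₀ (by positivity)]
            nlinarith
          linarith
        rw [hm2]
        have he : t^2/(2*reach M)*2 = t^2/reach M := by
          field_simp
        rw [he]
        have h2 : t ≤ t^2/reach M := by
          rw [le_div_iff₀ hτ]
          nlinarith
        linarith
      · -- t < reach
        obtain ⟨mm, hmm, hdmm⟩ := hMc.exists_infDist_eq_dist hMne y
        have hdmm' : dist y mm = δ := by rw [hδdef, hdmm]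
        have hδR : δ < reach M := lt_of_le_of_lt hδt htR
        obtain ⟨nv, hnv⟩ : ∃ nv, nv = δ⁻¹ • (y - mm) := ⟨_, rfl⟩
        have hyn : y = mm + δ•nv := by
          rw [hnv, smul_smul, mul_inv_cancel₀ (ne_of_gt hδpos), one_smul]
          abel
        have hnorm : ‖nv‖ = 1 := by
          rw [hnv, norm_smul, Real.norm_eq_abs, abs_of_pos (by positivity), ← dist_eq_norm,
            hdmm']
          field_simp
        have hbase : Metric.infDist (mm + δ•nv) M = δ := by
          rw [← hyn]
          exact hδdef.symm
        have key' : ∀ τ' : ℝ, δ ≤ τ' → τ' < reach M → 2*τ'*δ - δ^2 ≤ t^2 := by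
          intro τ' hτ1 hτ2
          have hext := extension hMc hMne hmm hnorm hδpos hbase hτ1 hτ2
          have hc_dist : ∀ a ∈ σ, τ' ≤ dist (mm + τ'•nv) a := by
            intro a ha
            have h5 := Metric.infDist_le_dist_of_mem (x := mm + τ'•nv) (hA (hσA ha))
            rw [hext] at h5
            exact h5
          have hcy : ‖(mm + τ'•nv) - y‖ = τ' - δ := by
            have he : (mm + τ'•nv) - y = (τ' - δ)•nv := by
              rw [hyn, sub_smul]
              abel
            rw [he, norm_smul, Real.norm_eq_abs, abs_of_nonneg (by linarith), hnorm, mul_one]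
          apply le_of_forall_pos_le_add
          intro ζ hζ
          obtain ⟨ζ', hζ'def⟩ : ∃ w : ℝ, w = min (ζ/(2*t+2)) 1 := ⟨_, rfl⟩
          have hζ'0 : 0 < ζ' := by
            rw [hζ'def]
            exact lt_min (by positivity) one_pos
          have hζ'1 : ζ' ≤ 1 := hζ'def ▸ min_le_right _ _
          have hζ'2 : ζ' ≤ ζ/(2*t+2) := hζ'def ▸ min_le_left _ _
          obtain ⟨z, hz⟩ := hball (t + ζ') (by linarith)
          have hcc := core_convex (c := mm + τ'•nv) hyσ hz hc_dist (by linarith)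
          rw [hcy] at hcc
          have hb1 : (t + ζ')^2 ≤ t^2 + ζ := by
            have h6 : ζ'*(2*t+2) ≤ ζ := by
              rw [← le_div_iff₀ (by linarith)]
              exact hζ'2
            nlinarith
          nlinarith [sq_nonneg ‖z - y‖]
        have keyR : 2*(reach M)*δ ≤ t^2 + δ^2 := by
          apply le_of_forall_pos_le_add
          intro ζ hζ
          obtain ⟨e, hedef⟩ : ∃ w : ℝ, w = min (ζ/(2*δ+1)) ((reach M)/2) := ⟨_, rfl⟩
          have he0 : 0 < e := by
            rw [hedef]
            exact lt_min (by positivity) (by linarith)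
          have he1 : e ≤ ζ/(2*δ+1) := hedef ▸ min_le_left _ _
          have he2 : 2*δ*e ≤ ζ := by
            have h3 : e*(2*δ+1) ≤ ζ := by
              rw [← le_div_iff₀ (by linarith)]
              exact he1
            nlinarith
          rcases lt_or_ge (reach M - e) δ with hc1 | hc2
          · nlinarith [hδt, htR]
          · have h4 := key' (reach M - e) hc2 (by linarith)
            nlinarith
        -- final arithmetic
        have hmin : min (1 + t^2/reach M^2) 2 = 1 + t^2/reach M^2 := by
          apply min_eq_left
          have h1 : t^2/reach M^2 ≤ 1 := by
            rw [div_le_one (by positivity)]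
            nlinarith
          linarith
        rw [hmin]
        obtain ⟨sq, hsqdef⟩ : ∃ w : ℝ, w = Real.sqrt (reach M^2 - t^2) := ⟨_, rfl⟩
        have hsq2 : sq^2 = reach M^2 - t^2 := by
          rw [hsqdef]; exact Real.sq_sqrt (by nlinarith)
        have hsq0 : 0 ≤ sq := hsqdef ▸ Real.sqrt_nonneg _
        have hsqR : sq ≤ reach M := by nlinarith
        have hstep1 : δ ≤ reach M - sq := by
          by_contra hcon
          push_neg at hcon
          nlinarith [keyR, htR, hδt]
        have hprod : t^2*(reach M^2 + t^2) - (reach M - sq)*(2*reach M^3)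
            = sq*(reach M - sq)^2*(2*reach M + sq) := by
          have hid : t^2*(reach M^2+t^2) - (reach M - sq)*(2*reach M^3) - sq*(reach M - sq)^2*(2*reach M + sq)
              = (t^2 - reach M^2 + sq^2)*(t^2 + 2*reach M^2 - sq^2) := by ring
          nlinarith [hid, hsq2]
        have hfinal : reach M - sq ≤ t^2/(2*reach M)*(1 + t^2/reach M^2) := by
          have hR0 : reach M ≠ 0 := ne_of_gt hτ
          have h7 : (1:ℝ) + t^2/reach M^2 = (reach M^2 + t^2)/reach M^2 := by
            field_simp
          have hRHS : t^2/(2*reach M)*(1 + t^2/reach M^2) = t^2*(reach M^2+t^2)/(2*reach M^3) := by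
            rw [h7, div_mul_div_comm]
            congr 1
            ring
          rw [hRHS, le_div_iff₀ (by positivity)]
          have hnn : 0 ≤ sq*(reach M - sq)^2*(2*reach M + sq) := by positivity
          nlinarith [hprod]
        linarith
  · have h1 : min (1 + t^2/reach M^2) 2 ≤ 2 := min_le_right _ _
    have h2 : (0:ℝ) ≤ t^2/(2*reach M) := by positivity
    have he : t^2/(2*reach M)*2 = t^2/reach M := by
      field_simp
    calc t^2/(2*reach M) * min (1 + t^2/reach M^2) 2 ≤ t^2/(2*reach M)*2 :=
          mul_le_mul_of_nonneg_left h1 h2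
      _ = t^2/reach M := he
end
end

section
/- Let A₁, …, A_n be i.i.d. standard exponential random variables and let A_(n) and A_(n−1) denote the largest and second-largest order statistics. Then for every real s > 1, P(A_(n)/A_(n−1) ≥ s) = n(n−1) B(s+1, n−1), where B is the Beta function; in particular P(A_(n)/A_(n−1) ≥ s) = n(n−1) ∫₀¹ x^s (1−x)^{n−2} dx. -/
open Metric Set

noncomputable section

variable {D d : ℕ}

section AuxExpOrderStat
open MeasureTheory ProbabilityTheory Real

-- deterministic sorting lemma
lemma sorted_ratio_iff {n : ℕ} (hn : 2 ≤ n) (g : Fin n → ℝ) (hpos : ∀ i, 0 < g i)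
    {s : ℝ} (hs : 1 < s) :
    s ≤ g (Tuple.sort g ⟨n - 1, Nat.sub_lt (by omega) Nat.one_pos⟩) /
      g (Tuple.sort g ⟨n - 2, Nat.sub_lt (by omega) Nat.two_pos⟩) ↔
      ∃ i, ∀ j, j ≠ i → s * g j ≤ g i := by
  set σ := Tuple.sort g with hσ
  have hmono : Monotone (g ∘ σ) := Tuple.monotone_sort g
  set a : Fin n := ⟨n - 1, Nat.sub_lt (by omega) Nat.one_pos⟩
  set b : Fin n := ⟨n - 2, Nat.sub_lt (by omega) Nat.two_pos⟩
  have hab : b ≤ a := by simp [a, b, Fin.le_def]; omega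
  have hba : b ≠ a := by simp [a, b, Fin.ne_iff_vne]; omega
  have hmax : ∀ j, g j ≤ g (σ a) := by
    intro j
    have h1 : σ.symm j ≤ a := by
      simp [a, Fin.le_def]; omega
    have := hmono h1
    simpa using this
  have hle : ∀ j, j ≠ σ a → g j ≤ g (σ b) := by
    intro j hj
    have h1 : σ.symm j ≤ b := by
      have hne' : σ.symm j ≠ a := by
        intro h; apply hj; rw [← h]; simp
      simp only [b, Fin.le_def]
      have hlt := (σ.symm j).isLt
      have hne : (σ.symm j : ℕ) ≠ n - 1 := by
        intro h; exact hne' (Fin.ext (by simpa [a] using h))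
      omega
    have := hmono h1
    simpa using this
  constructor
  · intro h
    refine ⟨σ a, fun j hj => ?_⟩
    have h2 : s * g (σ b) ≤ g (σ a) := (le_div_iff₀ (hpos _)).mp h
    have := hle j hj
    nlinarith [hpos j, (hpos (σ b))]
  · rintro ⟨i, hi⟩
    have hstrict : ∀ j, j ≠ i → g j < g i := fun j hj =>
      lt_of_lt_of_le (by nlinarith [hpos j]) (hi j hj)
    have hia : σ a = i := by
      by_contra h
      exact absurd (hmax i) (not_le.mpr (hstrict _ h))
    have hb_ne : σ b ≠ i := by
      rw [← hia]; exact fun h => hba (σ.injective h)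
    rw [le_div_iff₀ (hpos _), hia]
    exact hi _ hb_ne

lemma iid_map_pi {Ω : Type*} [MeasurableSpace Ω] (μ : Measure Ω) [IsProbabilityMeasure μ]
    {n : ℕ} (A : Fin n → Ω → ℝ) (hmeas : ∀ i, Measurable (A i))
    (hindep : iIndepFun A μ)
    (ν : Fin n → Measure ℝ) [∀ i, SigmaFinite (ν i)]
    (hdist : ∀ i, μ.map (A i) = ν i) :
    μ.map (fun ω i => A i ω) = Measure.pi ν := by
  refine (Measure.pi_eq fun t ht => ?_).symm
  rw [Measure.map_apply (measurable_pi_iff.mpr hmeas) (MeasurableSet.univ_pi ht)]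
  have hpre : (fun ω i => A i ω) ⁻¹' (Set.pi univ t) = ⋂ i ∈ Finset.univ, A i ⁻¹' t i := by
    ext ω; simp [Set.mem_pi]
  rw [hpre, hindep.measure_inter_preimage_eq_mul Finset.univ (fun i _ => ht i)]
  refine Finset.prod_congr rfl fun i _ => ?_
  rw [← hdist i, Measure.map_apply (hmeas i) (ht i)]

lemma exp_Iic (t : ℝ) :
    expMeasure 1 (Iic t) = ENNReal.ofReal (if 0 ≤ t then 1 - rexp (-t) else 0) := by
  have h : expMeasure 1 = volume.withDensity (exponentialPDF 1) := rfl
  rw [h, withDensity_apply _ measurableSet_Iic]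
  simpa using lintegral_exponentialPDF_eq_antiDeriv one_pos t

lemma pi_event_measure {m : ℕ} {s : ℝ} (hs : 1 < s) (i : Fin (m + 1)) :
    Measure.pi (fun _ : Fin (m + 1) => expMeasure 1) {x | ∀ j, j ≠ i → s * x j ≤ x i}
      = ENNReal.ofReal (∫ a in Ioi (0:ℝ), (1 - rexp (-(a / s))) ^ m * rexp (-a)) := by
  haveI : IsProbabilityMeasure (expMeasure 1) := isProbabilityMeasure_expMeasure one_pos
  have hs0 : (0:ℝ) < s := lt_trans one_pos hs
  set T : Set (ℝ × (Fin m → ℝ)) := {p | ∀ k, s * p.2 k ≤ p.1} with hTdef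
  have hT : MeasurableSet T := by
    have : T = ⋂ k, {p : ℝ × (Fin m → ℝ) | s * p.2 k ≤ p.1} := by ext; simp [hTdef]
    rw [this]
    exact MeasurableSet.iInter fun k =>
      measurableSet_le (by fun_prop) measurable_fst
  have hpre : (MeasurableEquiv.piFinSuccAbove (fun _ => ℝ) i) ⁻¹' T
      = {x | ∀ j, j ≠ i → s * x j ≤ x i} := by
    ext x
    simp only [hTdef, mem_preimage, mem_setOf_eq, MeasurableEquiv.piFinSuccAbove_apply]
    constructor
    · intro h j hj
      obtain ⟨k, rfl⟩ := Fin.exists_succAbove_eq hj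
      exact h k
    · intro h k; exact h _ (Fin.succAbove_ne i k)
  have hmp := measurePreserving_piFinSuccAbove (fun _ : Fin (m + 1) => expMeasure 1) i
  rw [← hpre, hmp.measure_preimage hT.nullMeasurableSet, Measure.prod_apply hT]
  have hslice : ∀ a : ℝ, (Prod.mk a ⁻¹' T) = Set.pi univ (fun _ : Fin m => Iic (a / s)) := by
    intro a; ext y
    simp only [hTdef, mem_preimage, mem_setOf_eq, Set.mem_pi, mem_univ, true_implies, mem_Iic]
    exact forall_congr' fun k => by rw [le_div_iff₀ hs0, mul_comm]
  simp_rw [hslice, Measure.pi_pi, Finset.prod_const, Finset.card_univ, Fintype.card_fin, exp_Iic]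
  have hs0 : (0:ℝ) < s := lt_trans one_pos hs
  set h : ℝ → ℝ := fun a => (1 - rexp (-(a / s))) ^ m * rexp (-a) with hhdef
  have hhcont : Continuous h := by
    exact ((continuous_const.sub (((continuous_id.div_const s).neg).rexp)).pow m).mul
      ((continuous_id.neg).rexp)
  have hFmeas : Measurable fun a : ℝ =>
      ENNReal.ofReal (if 0 ≤ a / s then 1 - rexp (-(a / s)) else 0) ^ m := by
    apply Measurable.pow_const
    apply Measurable.ennreal_ofReal
    exact Measurable.ite (measurableSet_le measurable_const (measurable_id.div_const s))
      (continuous_const.sub (((continuous_id.div_const s).neg).rexp)).measurable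
      measurable_const
  have hexp : expMeasure 1 = volume.withDensity (exponentialPDF 1) := rfl
  have hpdf : Measurable (exponentialPDF 1) := (measurable_exponentialPDFReal 1).ennreal_ofReal
  rw [hexp, lintegral_withDensity_eq_lintegral_mul _ hpdf hFmeas]
  rw [← lintegral_add_compl _ (measurableSet_Ici (a := (0:ℝ)))]
  have h2 : ∫⁻ a in (Ici (0:ℝ))ᶜ, (exponentialPDF 1 * fun a =>
      ENNReal.ofReal (if 0 ≤ a / s then 1 - rexp (-(a / s)) else 0) ^ m) a = 0 := by
    rw [compl_Ici, setLIntegral_congr_fun_ae measurableSet_Iio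
      (ae_of_all _ fun a (ha : a < 0) => ?_), lintegral_zero]
    simp [exponentialPDF_of_neg ha]
  have h1 : ∫⁻ a in Ici (0:ℝ), (exponentialPDF 1 * fun a =>
      ENNReal.ofReal (if 0 ≤ a / s then 1 - rexp (-(a / s)) else 0) ^ m) a
      = ∫⁻ a in Ici (0:ℝ), ENNReal.ofReal (h a) := by
    refine setLIntegral_congr_fun_ae measurableSet_Ici (ae_of_all _ fun a (ha : 0 ≤ a) => ?_)
    have hds : 0 ≤ a / s := div_nonneg ha hs0.le
    have hnn : 0 ≤ 1 - rexp (-(a / s)) := by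
      have : rexp (-(a / s)) ≤ rexp 0 := exp_le_exp.mpr (by linarith)
      simpa [Real.exp_zero] using sub_nonneg.mpr this
    simp only [Pi.mul_apply, exponentialPDF_of_nonneg ha, if_pos hds]
    rw [← ENNReal.ofReal_pow hnn, ← ENNReal.ofReal_mul (by positivity), hhdef]
    rw [mul_comm]
    norm_num
  rw [h1, h2, add_zero]
  have hint : IntegrableOn h (Ici (0:ℝ)) := by
    rw [integrableOn_Ici_iff_integrableOn_Ioi]
    have hg : IntegrableOn (fun a : ℝ => rexp (-a)) (Ioi (0:ℝ)) := by
      simpa using exp_neg_integrableOn_Ioi 0 one_pos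
    refine hg.mono' hhcont.aestronglyMeasurable ?_
    refine (ae_restrict_iff' measurableSet_Ioi).mpr (ae_of_all _ fun a (ha : 0 < a) => ?_)
    have hds : 0 ≤ a / s := div_nonneg ha.le hs0.le
    have hnn : 0 ≤ 1 - rexp (-(a / s)) := by
      have : rexp (-(a / s)) ≤ rexp 0 := exp_le_exp.mpr (by linarith)
      simpa [Real.exp_zero] using sub_nonneg.mpr this
    have hle1 : (1 - rexp (-(a / s))) ^ m ≤ 1 := by
      apply pow_le_one₀ hnn
      have := Real.exp_pos (-(a / s)); linarith
    rw [hhdef]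
    simp only [norm_mul, norm_pow, Real.norm_eq_abs, abs_of_nonneg hnn,
      abs_of_pos (Real.exp_pos _)]
    nlinarith [Real.exp_pos (-a), pow_nonneg hnn m]
  have hnnae : 0 ≤ᵐ[volume.restrict (Ici (0:ℝ))] h := by
    refine (ae_restrict_iff' measurableSet_Ici).mpr (ae_of_all _ fun a (ha : 0 ≤ a) => ?_)
    have hds : 0 ≤ a / s := div_nonneg ha hs0.le
    have hnn : 0 ≤ 1 - rexp (-(a / s)) := by
      have : rexp (-(a / s)) ≤ rexp 0 := exp_le_exp.mpr (by linarith)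
      simpa [Real.exp_zero] using sub_nonneg.mpr this
    exact mul_nonneg (pow_nonneg hnn m) (Real.exp_pos _).le
  rw [← ofReal_integral_eq_lintegral_ofReal hint hnnae, integral_Ici_eq_integral_Ioi]

lemma subst_lemma (m : ℕ) {s : ℝ} (hs : 1 < s) :
    ∫ a in Ioi (0:ℝ), (1 - rexp (-(a / s))) ^ m * rexp (-a)
      = s * ∫ x in Ioo (0:ℝ) 1, x ^ (s - 1) * (1 - x) ^ m := by
  have hs0 : (0:ℝ) < s := lt_trans one_pos hs
  set f : ℝ → ℝ := fun a => rexp (-(a / s)) with hfdef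
  set g : ℝ → ℝ := fun x => s * (x ^ (s - 1) * (1 - x) ^ m) with hgdef
  have hf' : ∀ a ∈ Ioi (0:ℝ), HasDerivWithinAt f (-(1 / s) * rexp (-(a / s))) (Ioi 0) a := by
    intro a _
    have h1 : HasDerivAt (fun a : ℝ => -(a / s)) (-(1 / s)) a := by
      exact ((hasDerivAt_id a).div_const s).neg
    have := h1.exp
    simpa [mul_comm] using this.hasDerivWithinAt
  have hinj : InjOn f (Ioi (0:ℝ)) := by
    intro x _ y _ hxy
    have := Real.exp_injective hxy
    field_simp at this
    linarith
  have himg : f '' (Ioi (0:ℝ)) = Ioo (0:ℝ) 1 := by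
    ext u
    constructor
    · rintro ⟨a, ha, rfl⟩
      exact ⟨Real.exp_pos _, by
        rw [Real.exp_lt_one_iff]
        have : (0:ℝ) < a / s := div_pos ha hs0
        linarith⟩
    · rintro ⟨hu0, hu1⟩
      refine ⟨-s * Real.log u, ?_, ?_⟩
      · have := Real.log_neg hu0 hu1
        have : 0 < -Real.log u := by linarith
        have := mul_pos hs0 this
        simpa [mul_comm, neg_mul] using this
      · simp only [hfdef]
        rw [show -(-s * Real.log u / s) = Real.log u by field_simp]
        exact Real.exp_log hu0
  have key := integral_image_eq_integral_abs_deriv_smul measurableSet_Ioi hf' hinj g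
  rw [himg] at key
  have hRHS : ∀ a : ℝ, |(-(1 / s) * rexp (-(a / s)))| • g (f a)
      = (1 - rexp (-(a / s))) ^ m * rexp (-a) := by
    intro a
    have hxp : (0:ℝ) < rexp (-(a / s)) := Real.exp_pos _
    rw [hgdef, hfdef]
    simp only [smul_eq_mul, abs_mul, abs_neg, abs_of_pos hxp, abs_of_pos (by positivity : (0:ℝ) < 1/s)]
    rw [Real.rpow_def_of_pos hxp, Real.log_exp]
    rw [show -(a / s) * (s - 1) = -a + a / s by field_simp; ring, Real.exp_add]
    have h1 : rexp (-(a / s)) * rexp (a / s) = 1 := by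
      rw [← Real.exp_add]; simp
    have h2 : 1 / s * s = 1 := by field_simp
    calc 1 / s * rexp (-(a / s)) * (s * (rexp (-a) * rexp (a / s) * (1 - rexp (-(a / s))) ^ m))
        = (rexp (-(a / s)) * rexp (a / s)) * (1 / s * s) * (rexp (-a) * (1 - rexp (-(a / s))) ^ m) := by ring
      _ = (1 - rexp (-(a / s))) ^ m * rexp (-a) := by rw [h1, h2]; ring
  rw [show (∫ x in Ioo (0:ℝ) 1, x ^ (s-1) * (1-x)^m) = s⁻¹ * ∫ x in Ioo (0:ℝ) 1, g x by
    rw [hgdef]; rw [integral_const_mul]; field_simp]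
  rw [key]
  rw [show (fun a => |(-(1 / s) * rexp (-(a / s)))| • g (f a))
    = fun a => (1 - rexp (-(a / s))) ^ m * rexp (-a) from funext hRHS]
  rw [← mul_assoc, mul_inv_cancel₀ hs0.ne', one_mul]

lemma beta_re (u : ℝ) (m : ℕ) :
    (Complex.betaIntegral u ((m:ℂ) + 1)).re = ∫ x in (0:ℝ)..1, x ^ (u - 1) * (1 - x) ^ m := by
  rw [Complex.betaIntegral]
  have hcongr : ∀ x ∈ Ioc (0:ℝ) 1,
      (x:ℂ) ^ ((u:ℂ) - 1) * (1 - (x:ℂ)) ^ ((m:ℂ) + 1 - 1) = ((x ^ (u-1) * (1-x)^m : ℝ) : ℂ) := by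
    intro x hx
    have h1 : (x:ℂ) ^ ((u:ℂ) - 1) = ((x ^ (u-1) : ℝ) : ℂ) := by
      rw [show ((u:ℂ) - 1) = ((u - 1 : ℝ) : ℂ) by push_cast; ring]
      exact (Complex.ofReal_cpow hx.1.le (u-1)).symm
    have h2 : (1 - (x:ℂ)) ^ ((m:ℂ) + 1 - 1) = (((1-x)^m : ℝ) : ℂ) := by
      rw [show ((m:ℂ) + 1 - 1) = ((m:ℕ):ℂ) by ring, Complex.cpow_natCast]
      push_cast; ring
    rw [h1, h2]; push_cast; ring
  rw [intervalIntegral.integral_of_le zero_le_one, intervalIntegral.integral_of_le zero_le_one]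
  rw [setIntegral_congr_fun measurableSet_Ioc hcongr]
  have := integral_ofReal (𝕜 := ℂ) (μ := (volume : Measure ℝ).restrict (Ioc 0 1))
    (f := fun x => x ^ (u - 1) * (1 - x) ^ m)
  rw [show (fun x : ℝ => ((x ^ (u - 1) * (1 - x) ^ m : ℝ) : ℂ)) = fun x : ℝ =>
    (RCLike.ofReal (K := ℂ)) (x ^ (u - 1) * (1 - x) ^ m) from rfl, this]
  simp [RCLike.ofReal_re]

lemma beta_step {s : ℝ} (hs : 1 < s) {m : ℕ} (hm : 1 ≤ m) :
    s * (Complex.betaIntegral s ((m:ℂ) + 1)).re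
      = m * (Complex.betaIntegral ((s:ℂ) + 1) m).re := by
  have h := Complex.betaIntegral_recurrence (u := (s:ℂ)) (v := (m:ℂ))
    (by simp; linarith) (by simp; exact_mod_cast Nat.pos_of_ne_zero (by omega))
  have := congrArg Complex.re h
  simpa [Complex.re_ofReal_mul] using this

end AuxExpOrderStat

open MeasureTheory ProbabilityTheory in
/-- For an i.i.d. sample `A₁, …, A_n` of standard exponential random variables and `s > 1`,
`P(A_(n)/A_(n−1) ≥ s) = n(n−1) B(s+1, n−1) = n(n−1) ∫₀¹ x^s (1−x)^{n−2} dx`. -/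
theorem exp_order_stat_ratio {Ω : Type*} [MeasurableSpace Ω]
    (μ : Measure Ω) [IsProbabilityMeasure μ] (n : ℕ) (hn : 2 ≤ n)
    (A : Fin n → Ω → ℝ) (hmeas : ∀ i, Measurable (A i))
    (hindep : iIndepFun A μ)
    (hdist : ∀ i, μ.map (A i) = expMeasure 1)
    (s : ℝ) (hs : 1 < s) :
    (μ {ω | s ≤ A (Tuple.sort (fun i => A i ω) ⟨n - 1, by omega⟩) ω /
        A (Tuple.sort (fun i => A i ω) ⟨n - 2, by omega⟩) ω}).toReal =
      n * (n - 1) * (Complex.betaIntegral (s + 1) (n - 1)).re ∧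
    (n : ℝ) * (n - 1) * (Complex.betaIntegral (s + 1) (n - 1)).re =
      n * (n - 1) * ∫ x in (0 : ℝ)..1, x ^ s * (1 - x) ^ (n - 2) := by
  classical
  obtain ⟨k, rfl⟩ : ∃ k, n = k + 2 := ⟨n - 2, by omega⟩
  haveI : IsProbabilityMeasure (expMeasure 1) := isProbabilityMeasure_expMeasure one_pos
  have hs0 : (0:ℝ) < s := lt_trans one_pos hs
  -- Beta function identities
  have e2 : ((↑(k + 2) : ℂ) - 1) = ((k : ℕ) : ℂ) + 1 := by push_cast; ring
  have e1 : ((s : ℂ) + 1) = ((s + 1 : ℝ) : ℂ) := by push_cast; ring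
  have hbeta2 : (Complex.betaIntegral (↑s + 1) (↑(k + 2) - 1)).re
      = ∫ x in (0:ℝ)..1, x ^ s * (1 - x) ^ (k + 2 - 2) := by
    rw [e1, e2, beta_re (s + 1) k]
    norm_num
  -- the collection of events
  set Ev : Fin (k + 2) → Set Ω := fun i => {ω | ∀ j, j ≠ i → s * A j ω ≤ A i ω} with hEv
  set G : Set Ω := {ω | ∀ i, 0 < A i ω} with hGdef
  have hGm : MeasurableSet G := by
    have : G = ⋂ i, {ω | 0 < A i ω} := by ext; simp [hGdef]
    rw [this]
    exact MeasurableSet.iInter fun i => measurableSet_lt measurable_const (hmeas i)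
  have hGc : μ Gᶜ = 0 := by
    have hsub : Gᶜ ⊆ ⋃ i, A i ⁻¹' Iic 0 := by
      intro ω hω
      simp only [hGdef, mem_compl_iff, mem_setOf_eq, not_forall, not_lt] at hω
      obtain ⟨i, hi⟩ := hω
      exact mem_iUnion.mpr ⟨i, by simpa using hi⟩
    refine measure_mono_null hsub (measure_iUnion_null fun i => ?_)
    rw [← Measure.map_apply (hmeas i) measurableSet_Iic, hdist i, exp_Iic]
    norm_num
  have hEvm : ∀ i, MeasurableSet (Ev i) := by
    intro i
    have : Ev i = ⋂ j, ⋂ (_ : j ≠ i), {ω | s * A j ω ≤ A i ω} := by ext; simp [hEv]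
    rw [this]
    exact MeasurableSet.iInter fun j => MeasurableSet.iInter fun _ =>
      measurableSet_le ((hmeas j).const_mul s) (hmeas i)
  have hE_eq : {ω | s ≤ A (Tuple.sort (fun i => A i ω) ⟨k + 2 - 1, by omega⟩) ω /
        A (Tuple.sort (fun i => A i ω) ⟨k + 2 - 2, by omega⟩) ω} ∩ G
      = (⋃ i, Ev i) ∩ G := by
    ext ω
    simp only [mem_inter_iff, mem_setOf_eq, mem_iUnion, hEv, hGdef]
    constructor
    · rintro ⟨h1, h2⟩
      exact ⟨(sorted_ratio_iff (by omega) (fun i => A i ω) h2 hs).mp h1, h2⟩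
    · rintro ⟨h1, h2⟩
      exact ⟨(sorted_ratio_iff (by omega) (fun i => A i ω) h2 hs).mpr h1, h2⟩
  have hdisj : Pairwise (Function.onFun Disjoint fun i => Ev i ∩ G) := by
    intro i j hij
    rw [Function.onFun, Set.disjoint_left]
    rintro ω ⟨hi, hGω⟩ ⟨hj, -⟩
    have h1 : s * A j ω ≤ A i ω := hi j (Ne.symm hij)
    have h2 : s * A i ω ≤ A j ω := hj i hij
    have p1 : 0 < A i ω := hGω i
    have p2 : 0 < A j ω := hGω j
    nlinarith
  have hEvμ : ∀ i, μ (Ev i)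
      = ENNReal.ofReal (∫ a in Ioi (0:ℝ), (1 - Real.exp (-(a / s))) ^ (k + 1) * Real.exp (-a)) := by
    intro i
    have hφ : Measurable (fun ω (j : Fin (k + 2)) => A j ω) := measurable_pi_iff.mpr hmeas
    have hSm : MeasurableSet {x : Fin (k + 2) → ℝ | ∀ j, j ≠ i → s * x j ≤ x i} := by
      have : {x : Fin (k + 2) → ℝ | ∀ j, j ≠ i → s * x j ≤ x i}
          = ⋂ j, ⋂ (_ : j ≠ i), {x : Fin (k + 2) → ℝ | s * x j ≤ x i} := by ext; simp
      rw [this]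
      exact MeasurableSet.iInter fun j => MeasurableSet.iInter fun _ =>
        measurableSet_le (by fun_prop) (measurable_pi_apply i)
    have hpre : Ev i = (fun ω (j : Fin (k + 2)) => A j ω) ⁻¹'
        {x : Fin (k + 2) → ℝ | ∀ j, j ≠ i → s * x j ≤ x i} := by
      ext ω; simp [hEv]
    rw [hpre, ← Measure.map_apply hφ hSm,
      iid_map_pi μ A hmeas hindep (fun _ => expMeasure 1) hdist]
    exact pi_event_measure hs i
  have hμE : μ {ω | s ≤ A (Tuple.sort (fun i => A i ω) ⟨k + 2 - 1, by omega⟩) ω /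
        A (Tuple.sort (fun i => A i ω) ⟨k + 2 - 2, by omega⟩) ω}
      = (k + 2) * ENNReal.ofReal
          (∫ a in Ioi (0:ℝ), (1 - Real.exp (-(a / s))) ^ (k + 1) * Real.exp (-a)) := by
    calc μ {ω | s ≤ A (Tuple.sort (fun i => A i ω) ⟨k + 2 - 1, by omega⟩) ω /
        A (Tuple.sort (fun i => A i ω) ⟨k + 2 - 2, by omega⟩) ω}
        = μ ({ω | s ≤ A (Tuple.sort (fun i => A i ω) ⟨k + 2 - 1, by omega⟩) ω /
        A (Tuple.sort (fun i => A i ω) ⟨k + 2 - 2, by omega⟩) ω} ∩ G) :=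
          (measure_inter_conull hGc).symm
      _ = μ ((⋃ i, Ev i) ∩ G) := by rw [hE_eq]
      _ = μ (⋃ i, Ev i ∩ G) := by rw [iUnion_inter]
      _ = ∑' i, μ (Ev i ∩ G) := measure_iUnion hdisj fun i => (hEvm i).inter hGm
      _ = ∑' i, μ (Ev i) := tsum_congr fun i => measure_inter_conull hGc
      _ = ∑ i, μ (Ev i) := tsum_fintype _
      _ = ∑ i : Fin (k + 2), ENNReal.ofReal
          (∫ a in Ioi (0:ℝ), (1 - Real.exp (-(a / s))) ^ (k + 1) * Real.exp (-a)) :=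
          Finset.sum_congr rfl fun i _ => hEvμ i
      _ = (k + 2) * ENNReal.ofReal
          (∫ a in Ioi (0:ℝ), (1 - Real.exp (-(a / s))) ^ (k + 1) * Real.exp (-a)) := by
          rw [Finset.sum_const, Finset.card_univ, Fintype.card_fin, nsmul_eq_mul]
          norm_num
  -- the value of the integral
  have hJnn : 0 ≤ ∫ a in Ioi (0:ℝ), (1 - Real.exp (-(a / s))) ^ (k + 1) * Real.exp (-a) := by
    refine setIntegral_nonneg measurableSet_Ioi fun a ha => ?_
    have hds : 0 ≤ a / s := div_nonneg (le_of_lt ha) hs0.le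
    have hnn : 0 ≤ 1 - Real.exp (-(a / s)) := by
      have : Real.exp (-(a / s)) ≤ Real.exp 0 := Real.exp_le_exp.mpr (by linarith)
      simpa [Real.exp_zero] using sub_nonneg.mpr this
    exact mul_nonneg (pow_nonneg hnn _) (Real.exp_pos _).le
  have hJval : ∫ a in Ioi (0:ℝ), (1 - Real.exp (-(a / s))) ^ (k + 1) * Real.exp (-a)
      = (k + 1) * (Complex.betaIntegral (↑s + 1) ((↑(k + 1) : ℕ) : ℂ)).re := by
    rw [subst_lemma (k + 1) hs]
    have hIoo : (∫ x in Ioo (0:ℝ) 1, x ^ (s - 1) * (1 - x) ^ (k + 1))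
        = (Complex.betaIntegral ↑s ((↑(k + 1) : ℕ) + 1)).re := by
      rw [beta_re s (k + 1), intervalIntegral.integral_of_le zero_le_one,
        integral_Ioc_eq_integral_Ioo]
    rw [hIoo, beta_step hs (by omega : 1 ≤ k + 1)]
    norm_cast
  refine ⟨?_, by rw [hbeta2]⟩
  rw [hμE, ENNReal.toReal_mul, ENNReal.toReal_ofReal hJnn, hJval]
  have e3 : (Complex.betaIntegral (↑s + 1) (↑(k + 2) - 1))
      = Complex.betaIntegral (↑s + 1) ((↑(k + 1) : ℕ) : ℂ) := by
    congr 1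
    push_cast; ring
  rw [e3]
  have e4 : ((k : ENNReal) + 2).toReal = (k : ℝ) + 2 := by
    rw [ENNReal.toReal_add (by simp) (by simp)]; simp
  rw [e4]
  push_cast
  ring
end
end
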